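/- arXiv:2404.15205 — 5 statements merged into one kernel-verified Lean document; each statement's English description precedes it below -/
import Mathlib

section
/- For every dimension d ≥ 1 and every non-decreasing function Ψ : ℝ_{≥0} → ℝ_{≥0}, there exists a probability measure μ on ℝ^d such that ∫_{ℝ^d} e^{Ψ(‖x‖)} μ(dx) < ∞, and yet for every t > 0, inf_{z ∈ ℝ^d, w ∈ S^{d−1}} ⟨w, −∇² log(μ*γ_t)(z) w⟩ = −∞. (One may take μ = ν × δ_0 × ⋯ × δ_0 where ν is the one-dimensional measure from the one-dimensional negative result.) -/
noncomputable section
open Real MeasureTheory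

/-- Centered Gaussian density on `ℝ^d` with covariance `t • I_d`. -/
def gaussDensity {d : ℕ} (t : ℝ) (x : EuclideanSpace ℝ (Fin d)) : ℝ :=
  (2 * π * t) ^ (-(d : ℝ) / 2) * Real.exp (-‖x‖ ^ 2 / (2 * t))

/-- The heat flow `μ * γ_t` started from a measure `μ` on `ℝ^d`. -/
def heatConvMeas {d : ℕ} (μ : Measure (EuclideanSpace ℝ (Fin d))) (t : ℝ)
    (z : EuclideanSpace ℝ (Fin d)) : ℝ :=
  ∫ x, gaussDensity t (z - x) ∂μ

open scoped RealInnerProductSpace ENNReal NNReal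

namespace NLC

def xpt (k : ℕ) : ℝ := (k : ℝ)^2

lemma xpt_nonneg (k : ℕ) : 0 ≤ xpt k := sq_nonneg _

lemma xpt_mono : Monotone xpt := fun i j h => by
  dsimp [xpt]; have : (i:ℝ) ≤ j := Nat.cast_le.2 h
  nlinarith [Nat.cast_nonneg (α := ℝ) i]

lemma xpt_zero : xpt 0 = 0 := by simp [xpt]

lemma xpt_gap (k : ℕ) : xpt (k+1) - xpt k = 2*k+1 := by
  simp [xpt]; ring

def gker (t c s : ℝ) : ℝ := Real.exp (-(s - c)^2 / (2*t))

lemma gker_pos {t c s : ℝ} : 0 < gker t c s := Real.exp_pos _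

lemma gker_le_one {t : ℝ} (ht : 0 < t) (c s : ℝ) : gker t c s ≤ 1 := by
  rw [gker, Real.exp_le_one_iff]
  apply div_nonpos_of_nonpos_of_nonneg
  · simp [neg_nonpos]; positivity
  · positivity

lemma sq_mul_gker_le {t : ℝ} (ht : 0 < t) (c s : ℝ) :
    (c - s)^2 * gker t c s ≤ 2*t := by
  have h2t : 0 < 2*t := by linarith
  have hg : gker t c s = Real.exp (-((s-c)^2/(2*t))) := by rw [gker, neg_div]
  have key : (s-c)^2/(2*t) * Real.exp (-((s-c)^2/(2*t))) ≤ 1 := by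
    rw [Real.exp_neg, mul_inv_le_iff₀ (Real.exp_pos _), one_mul]
    linarith [Real.add_one_le_exp ((s-c)^2/(2*t))]
  have : (c - s)^2 * gker t c s = 2*t * ((s-c)^2/(2*t) * Real.exp (-((s-c)^2/(2*t)))) := by
    rw [hg]; field_simp; ring
  rw [this]
  calc 2*t * ((s-c)^2/(2*t) * Real.exp (-((s-c)^2/(2*t)))) ≤ 2*t * 1 :=
        mul_le_mul_of_nonneg_left key (le_of_lt h2t)
    _ = 2*t := mul_one _

lemma abs_mul_gker_le {t : ℝ} (ht : 0 < t) (c s : ℝ) :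
    |c - s| * gker t c s ≤ 1 + 2*t := by
  have h1 : |c - s| ≤ 1 + (c - s)^2 := by nlinarith [abs_nonneg (c-s), sq_abs (c-s), sq_nonneg (|c-s| - 1)]
  have h2 : |c - s| * gker t c s ≤ (1 + (c-s)^2) * gker t c s :=
    mul_le_mul_of_nonneg_right h1 (le_of_lt gker_pos)
  have h3 : (1 + (c-s)^2) * gker t c s = gker t c s + (c-s)^2 * gker t c s := by ring
  have := sq_mul_gker_le ht c s
  have := gker_le_one ht c s
  linarith


def term0 (w : ℕ → ℝ) (t : ℝ) (k : ℕ) (s : ℝ) : ℝ := w k * gker t (xpt k) s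
def term1 (w : ℕ → ℝ) (t : ℝ) (k : ℕ) (s : ℝ) : ℝ :=
  w k * ((xpt k - s)/t * gker t (xpt k) s)
def term2 (w : ℕ → ℝ) (t : ℝ) (k : ℕ) (s : ℝ) : ℝ :=
  w k * (((xpt k - s)/t)^2 * gker t (xpt k) s - 1/t * gker t (xpt k) s)

def Fs (w : ℕ → ℝ) (t s : ℝ) : ℝ := ∑' k, term0 w t k s
def F1 (w : ℕ → ℝ) (t s : ℝ) : ℝ := ∑' k, term1 w t k s
def F2 (w : ℕ → ℝ) (t s : ℝ) : ℝ := ∑' k, term2 w t k s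

section terms
variable {t : ℝ} {w : ℕ → ℝ}

lemma hasDerivAt_term0 (ht : 0 < t) (k : ℕ) (s : ℝ) :
    HasDerivAt (term0 w t k) (term1 w t k s) s := by
  have h : HasDerivAt (fun y : ℝ => -(y - xpt k)^2/(2*t))
      ((xpt k - s)/t) s := by
    have h1 : HasDerivAt (fun y : ℝ => (y - xpt k)^2) (2*(s - xpt k)) s := by
      simpa using (((hasDerivAt_id s).sub_const (xpt k)).fun_pow 2)
    have := (h1.neg).div_const (2*t)
    exact this.congr_deriv (by field_simp; ring)
  have hh := (h.exp).const_mul (w k)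
  show HasDerivAt (fun y => w k * Real.exp (-(y - xpt k)^2/(2*t)))
    (w k * ((xpt k - s)/t * Real.exp (-(s - xpt k)^2/(2*t)))) s
  exact hh.congr_deriv (by ring)

lemma hasDerivAt_term1 (ht : 0 < t) (k : ℕ) (s : ℝ) :
    HasDerivAt (term1 w t k) (term2 w t k s) s := by
  have h : HasDerivAt (fun y : ℝ => -(y - xpt k)^2/(2*t))
      ((xpt k - s)/t) s := by
    have h1 : HasDerivAt (fun y : ℝ => (y - xpt k)^2) (2*(s - xpt k)) s := by
      simpa using (((hasDerivAt_id s).sub_const (xpt k)).fun_pow 2)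
    have := (h1.neg).div_const (2*t)
    exact this.congr_deriv (by field_simp; ring)
  have hlin : HasDerivAt (fun y : ℝ => (xpt k - y)/t) (-1/t) s := by
    have := ((hasDerivAt_id s).const_sub (xpt k)).div_const t
    exact this
  have hmul := (hlin.mul h.exp).const_mul (w k)
  show HasDerivAt (fun y => w k * ((xpt k - y)/t * Real.exp (-(y - xpt k)^2/(2*t))))
    (w k * (((xpt k - s)/t)^2 * Real.exp (-(s - xpt k)^2/(2*t))
      - 1/t * Real.exp (-(s - xpt k)^2/(2*t)))) s
  exact hmul.congr_deriv (by ring)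

lemma cont_term0 (k : ℕ) : Continuous (fun s => term0 w t k s) := by
  unfold term0 gker
  fun_prop

lemma cont_term2 (k : ℕ) : Continuous (fun s => term2 w t k s) := by
  unfold term2 gker
  fun_prop

lemma abs_term0_le (ht : 0 < t) (hw0 : ∀ k, 0 ≤ w k) (k : ℕ) (s : ℝ) :
    |term0 w t k s| ≤ w k := by
  rw [term0, abs_mul, abs_of_nonneg (hw0 k), abs_of_pos (gker_pos)]
  calc w k * gker t (xpt k) s ≤ w k * 1 :=
        mul_le_mul_of_nonneg_left (gker_le_one ht _ _) (hw0 k)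
    _ = w k := mul_one _

lemma abs_term1_le (ht : 0 < t) (hw0 : ∀ k, 0 ≤ w k) (k : ℕ) (s : ℝ) :
    |term1 w t k s| ≤ w k * ((1 + 2*t)/t) := by
  rw [term1, abs_mul, abs_of_nonneg (hw0 k)]
  apply mul_le_mul_of_nonneg_left _ (hw0 k)
  rw [abs_mul, abs_div, abs_of_pos ht, abs_of_pos (gker_pos), div_mul_eq_mul_div,
    div_le_div_iff_of_pos_right ht]
  exact abs_mul_gker_le ht _ _

lemma abs_term2_le (ht : 0 < t) (hw0 : ∀ k, 0 ≤ w k) (k : ℕ) (s : ℝ) :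
    |term2 w t k s| ≤ w k * (3/t) := by
  rw [term2, abs_mul, abs_of_nonneg (hw0 k)]
  apply mul_le_mul_of_nonneg_left _ (hw0 k)
  have h1 : |((xpt k - s)/t)^2 * gker t (xpt k) s| ≤ 2/t := by
    rw [abs_mul, abs_of_pos gker_pos, abs_of_nonneg (sq_nonneg _), div_pow,
      div_mul_eq_mul_div, div_le_div_iff₀ (by positivity) ht]
    calc (xpt k - s)^2 * gker t (xpt k) s * t ≤ (2*t) * t :=
          mul_le_mul_of_nonneg_right (sq_mul_gker_le ht _ _) (le_of_lt ht)
      _ = 2 * t^2 := by ring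
  have h2 : |1/t * gker t (xpt k) s| ≤ 1/t := by
    rw [abs_mul, abs_of_pos (by positivity : (0:ℝ) < 1/t), abs_of_pos gker_pos]
    calc 1/t * gker t (xpt k) s ≤ 1/t * 1 :=
          mul_le_mul_of_nonneg_left (gker_le_one ht _ _) (by positivity)
      _ = 1/t := mul_one _
  calc |((xpt k - s)/t)^2 * gker t (xpt k) s - 1/t * gker t (xpt k) s|
      ≤ |((xpt k - s)/t)^2 * gker t (xpt k) s| + |1/t * gker t (xpt k) s| := abs_sub _ _
    _ ≤ 2/t + 1/t := add_le_add h1 h2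
    _ = 3/t := by ring

lemma summable_term0 (ht : 0 < t) (hw : Summable w) (hw0 : ∀ k, 0 ≤ w k) (s : ℝ) :
    Summable (fun k => term0 w t k s) :=
  Summable.of_norm_bounded hw (fun k => abs_term0_le ht hw0 k s)

lemma summable_term1 (ht : 0 < t) (hw : Summable w) (hw0 : ∀ k, 0 ≤ w k) (s : ℝ) :
    Summable (fun k => term1 w t k s) :=
  Summable.of_norm_bounded (hw.mul_right ((1 + 2*t)/t)) (fun k => abs_term1_le ht hw0 k s)

lemma summable_term2 (ht : 0 < t) (hw : Summable w) (hw0 : ∀ k, 0 ≤ w k) (s : ℝ) :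
    Summable (fun k => term2 w t k s) :=
  Summable.of_norm_bounded (hw.mul_right (3/t)) (fun k => abs_term2_le ht hw0 k s)

lemma hasDerivAt_Fs (ht : 0 < t) (hw : Summable w) (hw0 : ∀ k, 0 ≤ w k) (s : ℝ) :
    HasDerivAt (fun y => Fs w t y) (F1 w t s) s := by
  apply hasDerivAt_tsum (u := fun k => w k * ((1 + 2*t)/t))
    (hw.mul_right _) (fun k y => hasDerivAt_term0 ht k y)
    (fun k y => abs_term1_le ht hw0 k y)
    (summable_term0 ht hw hw0 0)

lemma hasDerivAt_F1 (ht : 0 < t) (hw : Summable w) (hw0 : ∀ k, 0 ≤ w k) (s : ℝ) :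
    HasDerivAt (fun y => F1 w t y) (F2 w t s) s := by
  apply hasDerivAt_tsum (u := fun k => w k * (3/t))
    (hw.mul_right _) (fun k y => hasDerivAt_term1 ht k y)
    (fun k y => abs_term2_le ht hw0 k y)
    (summable_term1 ht hw hw0 0)

lemma cont_F2 (ht : 0 < t) (hw : Summable w) (hw0 : ∀ k, 0 ≤ w k) :
    Continuous (fun s => F2 w t s) := by
  apply continuous_tsum (fun k => cont_term2 k) (hw.mul_right (3/t))
  exact fun k y => abs_term2_le ht hw0 k y

lemma Fs_pos (ht : 0 < t) (hw : Summable w) (hw0 : ∀ k, 0 < w k) (s : ℝ) :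
    0 < Fs w t s := by
  apply Summable.tsum_pos (summable_term0 ht hw (fun k => (hw0 k).le) s)
    (fun k => le_of_lt (mul_pos (hw0 k) gker_pos)) 0
  exact mul_pos (hw0 0) gker_pos

lemma contDiff_Fs (ht : 0 < t) (hw : Summable w) (hw0 : ∀ k, 0 ≤ w k) :
    ContDiff ℝ 2 (fun s => Fs w t s) := by
  have hd1 : (deriv fun s => Fs w t s) = fun s => F1 w t s := by
    funext s; exact (hasDerivAt_Fs ht hw hw0 s).deriv
  have hd2 : (deriv fun s => F1 w t s) = fun s => F2 w t s := by
    funext s; exact (hasDerivAt_F1 ht hw hw0 s).deriv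
  rw [show (2 : WithTop ℕ∞) = 1 + 1 from by norm_num]
  rw [contDiff_succ_iff_deriv]
  refine ⟨fun s => (hasDerivAt_Fs ht hw hw0 s).differentiableAt, by simp, ?_⟩
  rw [hd1, contDiff_one_iff_deriv]
  exact ⟨fun s => (hasDerivAt_F1 ht hw hw0 s).differentiableAt,
    by rw [hd2]; exact cont_F2 ht hw hw0⟩


lemma term0_nonneg (hw0 : ∀ k, 0 ≤ w k) (k : ℕ) (s : ℝ) : 0 ≤ term0 w t k s :=
  mul_nonneg (hw0 k) gker_pos.le

lemma gker_anti_left (ht : 0 < t) {c c' s : ℝ} (h1 : c ≤ c') (h2 : c' ≤ s) :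
    gker t c s ≤ gker t c' s := by
  rw [gker, gker, Real.exp_le_exp, div_le_div_iff_of_pos_right (by linarith : (0:ℝ) < 2*t)]
  nlinarith

lemma gker_anti_right (ht : 0 < t) {c c' s : ℝ} (h1 : s ≤ c') (h2 : c' ≤ c) :
    gker t c s ≤ gker t c' s := by
  rw [gker, gker, Real.exp_le_exp, div_le_div_iff_of_pos_right (by linarith : (0:ℝ) < 2*t)]
  nlinarith

lemma gker_ratio (ht : 0 < t) {c c' s L : ℝ}
    (h : ((s - c')^2 - (s - c)^2)/(2*t) < L) :
    gker t c s < Real.exp L * gker t c' s := by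
  rw [gker, gker, ← Real.exp_add, Real.exp_lt_exp]
  have e : (-(s - c)^2)/(2*t) - (-(s - c')^2)/(2*t) = ((s - c')^2 - (s - c)^2)/(2*t) := by
    ring
  linarith [e, h]

lemma cont_Fs (ht : 0 < t) (hw : Summable w) (hw0 : ∀ k, 0 ≤ w k) :
    Continuous (fun s => Fs w t s) :=
  continuous_iff_continuousAt.2 fun s => (hasDerivAt_Fs ht hw hw0 s).continuousAt

end terms


section series
variable {t : ℝ} {w : ℕ → ℝ}

lemma summable_A2 (ht : 0 < t) (hw : Summable w) (hw0 : ∀ k, 0 ≤ w k) (s : ℝ) :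
    Summable (fun j => w j * (xpt j - s)^2 * gker t (xpt j) s) := by
  apply Summable.of_norm_bounded (g := fun j => w j * (2*t)) (hw.mul_right _)
  intro j
  rw [Real.norm_eq_abs, abs_mul, abs_mul, abs_of_nonneg (hw0 j),
    abs_of_nonneg (sq_nonneg _), abs_of_pos gker_pos, mul_assoc]
  exact mul_le_mul_of_nonneg_left (sq_mul_gker_le ht _ _) (hw0 j)

lemma summable_A1 (ht : 0 < t) (hw : Summable w) (hw0 : ∀ k, 0 ≤ w k) (s : ℝ) :
    Summable (fun j => w j * (xpt j - s) * gker t (xpt j) s) := by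
  apply Summable.of_norm_bounded (g := fun j => w j * (1 + 2*t)) (hw.mul_right _)
  intro j
  rw [Real.norm_eq_abs, abs_mul, abs_mul, abs_of_nonneg (hw0 j), abs_of_pos gker_pos,
    mul_assoc]
  exact mul_le_mul_of_nonneg_left (abs_mul_gker_le ht _ _) (hw0 j)

lemma summable_P (ht : 0 < t) (hw : Summable w) (hw0 : ∀ k, 0 ≤ w k) (s b : ℝ) :
    Summable (fun j => w j * ((xpt j - s) - b)^2 * gker t (xpt j) s) := by
  apply Summable.of_norm_bounded (g := fun j => w j * (4*t + 2*b^2)) (hw.mul_right _)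
  intro j
  rw [Real.norm_eq_abs, abs_mul, abs_mul, abs_of_nonneg (hw0 j),
    abs_of_nonneg (sq_nonneg _), abs_of_pos gker_pos, mul_assoc]
  apply mul_le_mul_of_nonneg_left _ (hw0 j)
  have h1 : ((xpt j - s) - b)^2 ≤ 2*(xpt j - s)^2 + 2*b^2 := by nlinarith [sq_nonneg ((xpt j - s) + b)]
  have h2 : ((xpt j - s) - b)^2 * gker t (xpt j) s
      ≤ (2*(xpt j - s)^2 + 2*b^2) * gker t (xpt j) s :=
    mul_le_mul_of_nonneg_right h1 gker_pos.le
  have h3 : (xpt j - s)^2 * gker t (xpt j) s ≤ 2*t := sq_mul_gker_le ht _ _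
  have h4 : gker t (xpt j) s ≤ 1 := gker_le_one ht _ _
  nlinarith [sq_nonneg b, gker_pos (t := t) (c := xpt j) (s := s)]

lemma eA1 (ht : 0 < t) (s : ℝ) :
    F1 w t s = (∑' j, w j * (xpt j - s) * gker t (xpt j) s) / t := by
  rw [F1, div_eq_inv_mul, ← tsum_mul_left]
  apply tsum_congr
  intro j
  rw [term1]
  field_simp

lemma eA2 (ht : 0 < t) (hw : Summable w) (hw0 : ∀ k, 0 ≤ w k) (s : ℝ) :
    F2 w t s = (∑' j, w j * (xpt j - s)^2 * gker t (xpt j) s)/t^2 - Fs w t s / t := by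
  have htne : t ≠ 0 := ht.ne'
  have h1 : ∀ j, term2 w t j s
      = (1/t^2) * (w j * (xpt j - s)^2 * gker t (xpt j) s) - (1/t) * term0 w t j s := by
    intro j
    rw [term2, term0]
    field_simp
  rw [F2, tsum_congr h1, Summable.tsum_sub ((summable_A2 ht hw hw0 s).mul_left _)
    ((summable_term0 ht hw hw0 s).mul_left _), tsum_mul_left, tsum_mul_left]
  rw [Fs]
  ring

lemma eP (ht : 0 < t) (hw : Summable w) (hw0 : ∀ k, 0 ≤ w k) (s b : ℝ) :
    (∑' j, w j * ((xpt j - s) - b)^2 * gker t (xpt j) s)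
      = (∑' j, w j * (xpt j - s)^2 * gker t (xpt j) s)
        - 2*b*(∑' j, w j * (xpt j - s) * gker t (xpt j) s)
        + b^2 * Fs w t s := by
  have h1 : ∀ j, w j * ((xpt j - s) - b)^2 * gker t (xpt j) s
      = (w j * (xpt j - s)^2 * gker t (xpt j) s
          - (2*b) * (w j * (xpt j - s) * gker t (xpt j) s))
        + (b^2) * term0 w t j s := by
    intro j
    rw [term0]
    ring
  rw [tsum_congr h1, Summable.tsum_add (((summable_A2 ht hw hw0 s)).sub
    ((summable_A1 ht hw hw0 s).mul_left _)) ((summable_term0 ht hw hw0 s).mul_left _),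
    Summable.tsum_sub (summable_A2 ht hw hw0 s) ((summable_A1 ht hw hw0 s).mul_left _),
    tsum_mul_left, tsum_mul_left, Fs]

end series


section main1d
variable {t : ℝ} {w : ℕ → ℝ}

set_option maxHeartbeats 2000000 in
lemma phi2_large (ht : 0 < t) (hw : Summable w) (hw0 : ∀ k, 0 < w k)
    (hw1 : ∑' k, w k = 1) (C : ℝ) :
    ∃ s : ℝ, C ≤ (F2 w t s * Fs w t s - (F1 w t s)^2) / (Fs w t s)^2 := by
  have hw0' : ∀ k, 0 ≤ w k := fun k => (hw0 k).le
  have hwle1 : ∀ j, w j ≤ 1 := by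
    intro j
    rw [← hw1]
    exact Summable.le_tsum hw j (fun i _ => hw0' i)
  -- choose k
  obtain ⟨k, hk⟩ := exists_nat_ge (8*(t + t^2 * max C 0))
  have hkey : 8*(t + t^2 * max C 0) ≤ (2*(k:ℝ)+1)^2 := by
    nlinarith [Nat.cast_nonneg (α := ℝ) k]
  set K := k + 1 with hK
  set Δ : ℝ := 2*(k:ℝ)+1 with hΔ
  have hΔpos : 0 < Δ := by positivity
  have hgap : xpt K - xpt k = Δ := xpt_gap k
  set m : ℝ := (xpt k + xpt K)/2 with hm
  have hmk : m - xpt k = Δ/2 := by rw [hm]; linarith [hgap]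
  have hKm : xpt K - m = Δ/2 := by rw [hm]; linarith [hgap]
  have hDpos : 0 < xpt K := by
    have : (1:ℝ) ≤ ((K:ℕ):ℝ) := by exact_mod_cast Nat.one_le_iff_ne_zero.2 (by omega)
    rw [xpt]; nlinarith
  set D := xpt K with hD
  -- T and splitting
  set T : ℝ → ℝ := fun s => ∑' j, term0 w t (j+K) s with hTdef
  have hsummT : ∀ s : ℝ, Summable (fun j => term0 w t (j+K) s) := fun s =>
    (summable_nat_add_iff K).2 (summable_term0 ht hw hw0' s)
  have hsplit : ∀ s : ℝ, (∑ i ∈ Finset.range K, term0 w t i s) + T s = Fs w t s :=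
    fun s => Summable.sum_add_tsum_nat_add K (summable_term0 ht hw hw0' s)
  have hFpos : ∀ s, 0 < Fs w t s := Fs_pos ht hw hw0
  have hcontF : Continuous (fun s => Fs w t s) := cont_Fs ht hw hw0'
  have hcontT : Continuous T := by
    have : T = fun s => Fs w t s - ∑ i ∈ Finset.range K, term0 w t i s := by
      funext s
      linarith [hsplit s]
    rw [this]
    exact hcontF.sub (continuous_finset_sum _ fun i _ => cont_term0 i)
  have hTnonneg : ∀ s, 0 ≤ T s := fun s =>
    tsum_nonneg (fun j => term0_nonneg hw0' _ s)
  -- the two test points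
  set s₁ : ℝ := m + t*(1 - Real.log (w K))/Δ with hs₁def
  set s₀ : ℝ := D/2 + t*(Real.log (w 0/2) - 1)/D with hs₀def
  have hlogK : Real.log (w K) ≤ 0 := Real.log_nonpos (hw0' K) (hwle1 K)
  have hlog0 : Real.log (w 0/2) ≤ 0 := by
    apply Real.log_nonpos (div_nonneg (hw0' 0) (by norm_num))
    linarith [hwle1 0]
  have hms₁ : m ≤ s₁ := by
    rw [hs₁def]
    have : 0 ≤ t*(1 - Real.log (w K))/Δ := by
      apply div_nonneg _ hΔpos.le
      apply mul_nonneg ht.le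
      linarith
    linarith
  have hs₀D : s₀ ≤ D/2 := by
    rw [hs₀def]
    have : t*(Real.log (w 0/2) - 1)/D ≤ 0 := by
      apply div_nonpos_of_nonpos_of_nonneg _ hDpos.le
      apply mul_nonpos_of_nonneg_of_nonpos ht.le
      linarith
    linarith
  have hxkm : xpt k ≤ m := by linarith [hmk, hΔpos]
  have hDm : D/2 ≤ m := by
    rw [hm, hD]
    linarith [xpt_nonneg k]
  have h01 : s₀ ≤ s₁ := le_trans (le_trans hs₀D hDm) hms₁
  -- claim at s₁
  have claim1 : Fs w t s₁ < 2 * T s₁ := by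
    have hxks₁ : xpt k ≤ s₁ := le_trans hxkm hms₁
    have hhead : (∑ i ∈ Finset.range K, term0 w t i s₁) ≤ gker t (xpt k) s₁ := by
      calc (∑ i ∈ Finset.range K, term0 w t i s₁)
          ≤ ∑ i ∈ Finset.range K, w i * gker t (xpt k) s₁ := by
            apply Finset.sum_le_sum
            intro i hi
            rw [term0]
            apply mul_le_mul_of_nonneg_left _ (hw0' i)
            have hik : i ≤ k := by
              have := Finset.mem_range.1 hi
              omega
            apply gker_anti_left ht (xpt_mono hik) hxks₁
        _ = (∑ i ∈ Finset.range K, w i) * gker t (xpt k) s₁ := by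
            rw [Finset.sum_mul]
        _ ≤ 1 * gker t (xpt k) s₁ := by
            apply mul_le_mul_of_nonneg_right _ gker_pos.le
            rw [← hw1]
            exact Summable.sum_le_tsum _ (fun i _ => hw0' i) hw
        _ = gker t (xpt k) s₁ := one_mul _
    have hkey1 : gker t (xpt k) s₁ < w K * gker t (xpt K) s₁ := by
      have heq : ((s₁ - xpt K)^2 - (s₁ - xpt k)^2)/(2*t) = Real.log (w K) - 1 := by
        have hXK : xpt K = m + Δ/2 := by linarith [hKm]
        have hXk : xpt k = m - Δ/2 := by linarith [hmk]
        rw [hs₁def, hXK, hXk]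
        field_simp
        ring
      have := gker_ratio ht (c := xpt k) (c' := xpt K) (s := s₁)
        (L := Real.log (w K)) (by rw [heq]; linarith)
      rwa [Real.exp_log (hw0 K)] at this
    have hTterm : w K * gker t (xpt K) s₁ ≤ T s₁ := by
      have := Summable.le_tsum (hsummT s₁) 0 (fun j _ => term0_nonneg hw0' _ s₁)
      simpa [term0, hTdef] using this
    linarith [hsplit s₁]
  -- claim at s₀
  have claim0 : 2 * T s₀ < Fs w t s₀ := by
    have hs₀K : s₀ ≤ xpt K := le_trans hs₀D (by linarith [hDpos])
    have hTle : T s₀ ≤ gker t (xpt K) s₀ := by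
      have hterm : ∀ j : ℕ, term0 w t (j+K) s₀ ≤ w (j+K) * gker t (xpt K) s₀ := by
        intro j
        rw [term0]
        apply mul_le_mul_of_nonneg_left _ (hw0' _)
        exact gker_anti_right ht hs₀K (xpt_mono (by omega : K ≤ j + K))
      calc T s₀ ≤ ∑' j, w (j+K) * gker t (xpt K) s₀ := by
            apply Summable.tsum_le_tsum hterm (hsummT s₀)
            exact ((summable_nat_add_iff K).2 hw).mul_right _
        _ = (∑' j, w (j+K)) * gker t (xpt K) s₀ := tsum_mul_right
        _ ≤ 1 * gker t (xpt K) s₀ := by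
            apply mul_le_mul_of_nonneg_right _ gker_pos.le
            have hsum := Summable.sum_add_tsum_nat_add K hw
            have : 0 ≤ ∑ i ∈ Finset.range K, w i := Finset.sum_nonneg fun i _ => hw0' i
            rw [hw1] at hsum
            linarith
        _ = gker t (xpt K) s₀ := one_mul _
    have hkey0 : gker t (xpt K) s₀ < (w 0/2) * gker t (xpt 0) s₀ := by
      have heq : ((s₀ - xpt 0)^2 - (s₀ - xpt K)^2)/(2*t) = Real.log (w 0/2) - 1 := by
        rw [hs₀def, xpt_zero, ← hD]
        field_simp
        ring
      have := gker_ratio ht (c := xpt K) (c' := xpt 0) (s := s₀)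
        (L := Real.log (w 0/2)) (by rw [heq]; linarith)
      rwa [Real.exp_log (div_pos (hw0 0) two_pos)] at this
    have hF0 : w 0 * gker t (xpt 0) s₀ ≤ Fs w t s₀ := by
      have := Summable.le_tsum (summable_term0 ht hw hw0' s₀) 0
        (fun j _ => term0_nonneg hw0' _ s₀)
      simpa [term0, Fs] using this
    linarith
  -- intermediate value
  have hcont : ContinuousOn (fun s => T s / Fs w t s) (Set.Icc s₀ s₁) :=
    (hcontT.div hcontF (fun s => (hFpos s).ne')).continuousOn
  have hmem : (1/2 : ℝ) ∈ Set.Icc (T s₀ / Fs w t s₀) (T s₁ / Fs w t s₁) := by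
    constructor
    · rw [div_le_iff₀ (hFpos s₀)]
      linarith
    · rw [le_div_iff₀ (hFpos s₁)]
      linarith
  obtain ⟨s, _, hs⟩ := intermediate_value_Icc h01 hcont hmem
  have hT2 : 2 * T s = Fs w t s := by
    have hs' : T s / Fs w t s = 1/2 := hs
    rw [div_eq_iff (hFpos s).ne'] at hs'
    linarith
  -- variance bound at s
  set F0 := Fs w t s with hF0def
  have hF0pos : 0 < F0 := hFpos s
  set A1 := ∑' j, w j * (xpt j - s) * gker t (xpt j) s with hA1
  set A2 := ∑' j, w j * (xpt j - s)^2 * gker t (xpt j) s with hA2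
  set b := A1 / F0 with hb
  set P := ∑' j, w j * ((xpt j - s) - b)^2 * gker t (xpt j) s with hP
  have hSP := summable_P ht hw hw0' s b
  have hPsplit : (∑ i ∈ Finset.range K, w i * ((xpt i - s) - b)^2 * gker t (xpt i) s)
      + (∑' j, w (j+K) * ((xpt (j+K) - s) - b)^2 * gker t (xpt (j+K)) s) = P :=
    Summable.sum_add_tsum_nat_add K hSP
  have hdiff : Δ^2/4 * (F0/2) ≤ P := by
    rcases le_total b (m - s) with hcase | hcase
    · -- right tail
      have htail : Δ^2/4 * T s
          ≤ ∑' j, w (j+K) * ((xpt (j+K) - s) - b)^2 * gker t (xpt (j+K)) s := by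
        rw [hTdef]
        simp only []
        rw [← tsum_mul_left]
        apply Summable.tsum_le_tsum _ ((hsummT s).mul_left _)
          ((summable_nat_add_iff K).2 hSP)
        intro j
        have ha : Δ/2 ≤ (xpt (j+K) - s) - b := by
          have h1 : xpt K ≤ xpt (j+K) := xpt_mono (by omega)
          have h2 : xpt K - s = (m - s) + Δ/2 := by linarith [hKm]
          linarith
        have h4 : Δ^2/4 ≤ ((xpt (j+K) - s) - b)^2 := by nlinarith
        calc Δ^2/4 * term0 w t (j+K) s
            ≤ ((xpt (j+K) - s) - b)^2 * term0 w t (j+K) s :=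
              mul_le_mul_of_nonneg_right h4 (term0_nonneg hw0' _ s)
          _ = w (j+K) * ((xpt (j+K) - s) - b)^2 * gker t (xpt (j+K)) s := by
              rw [term0]; ring
      have hheadnn : 0 ≤ ∑ i ∈ Finset.range K, w i * ((xpt i - s) - b)^2 * gker t (xpt i) s :=
        Finset.sum_nonneg fun i _ =>
          mul_nonneg (mul_nonneg (hw0' i) (sq_nonneg _)) gker_pos.le
      have hTF : T s = F0/2 := by rw [hF0def]; linarith
      rw [hTF] at htail
      linarith [htail, hPsplit]
    · -- left head
      have hhead : Δ^2/4 * (F0 - T s)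
          ≤ ∑ i ∈ Finset.range K, w i * ((xpt i - s) - b)^2 * gker t (xpt i) s := by
        have hFT : F0 - T s = ∑ i ∈ Finset.range K, term0 w t i s := by
          rw [hF0def]; linarith [hsplit s]
        rw [hFT, Finset.mul_sum]
        apply Finset.sum_le_sum
        intro i hi
        have hik : i ≤ k := by
          have := Finset.mem_range.1 hi
          omega
        have ha : (xpt i - s) - b ≤ -(Δ/2) := by
          have h1 : xpt i ≤ xpt k := xpt_mono hik
          have h2 : xpt k - s = (m - s) - Δ/2 := by linarith [hmk]
          linarith
        have h4 : Δ^2/4 ≤ ((xpt i - s) - b)^2 := by nlinarith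
        calc Δ^2/4 * term0 w t i s
            ≤ ((xpt i - s) - b)^2 * term0 w t i s :=
              mul_le_mul_of_nonneg_right h4 (term0_nonneg hw0' _ s)
          _ = w i * ((xpt i - s) - b)^2 * gker t (xpt i) s := by
              rw [term0]; ring
      have htailnn : 0 ≤ ∑' j, w (j+K) * ((xpt (j+K) - s) - b)^2 * gker t (xpt (j+K)) s :=
        tsum_nonneg fun j =>
          mul_nonneg (mul_nonneg (hw0' _) (sq_nonneg _)) gker_pos.le
      have hTF : F0 - T s = F0/2 := by rw [hF0def]; linarith
      rw [hTF] at hhead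
      linarith [hhead, hPsplit]
  -- identity
  have hid : (F2 w t s * F0 - (F1 w t s)^2)/F0^2 = P/(t^2*F0) - 1/t := by
    have e2 := eA2 ht hw hw0' s
    have e1 := eA1 (w := w) ht s
    have eP' := eP ht hw hw0' s b
    rw [hP, eP', e2, e1, ← hA1, ← hA2, ← hF0def, hb]
    field_simp
    ring
  refine ⟨s, ?_⟩
  rw [← hF0def, hid]
  have ht2F : 0 < t^2*F0 := by positivity
  have hquot : (Δ^2/4 * (F0/2))/(t^2*F0) ≤ P/(t^2*F0) := by
    rw [div_le_div_iff_of_pos_right ht2F]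
    exact hdiff
  have heqq : (Δ^2/4 * (F0/2))/(t^2*F0) = Δ^2/(8*t^2) := by
    field_simp
    ring
  have hfin : max C 0 ≤ Δ^2/(8*t^2) - 1/t := by
    have e1 : (8*(t + t^2 * max C 0))/(8*t^2) = 1/t + max C 0 := by
      field_simp
    have e2 : (8*(t + t^2 * max C 0))/(8*t^2) ≤ Δ^2/(8*t^2) := by
      rw [div_le_div_iff_of_pos_right (by positivity : (0:ℝ) < 8*t^2)]
      exact hkey
    linarith
  calc C ≤ max C 0 := le_max_left _ _
    _ ≤ Δ^2/(8*t^2) - 1/t := hfin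
    _ ≤ P/(t^2*F0) - 1/t := by
        rw [← heqq]
        linarith [hquot]

end main1d


section dimE
variable {t : ℝ} {w : ℕ → ℝ}
variable {E : Type*} [NormedAddCommGroup E] [InnerProductSpace ℝ E]

lemma iterated_main (ht : 0 < t) (hw : Summable w) (hw0 : ∀ k, 0 < w k)
    (e : E) (he : ‖e‖ = 1) (CC : ℝ) (s : ℝ) :
    iteratedFDeriv ℝ 2
      (fun y : E => CC + -(‖y‖^2 - ⟪e, y⟫^2)/(2*t) + Real.log (Fs w t ⟪e, y⟫))
      (s • e) ![e, e]
      = (F2 w t s * Fs w t s - (F1 w t s)^2) / (Fs w t s)^2 := by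
  have hw0' : ∀ k, 0 ≤ w k := fun k => (hw0 k).le
  have hFpos := Fs_pos ht hw hw0
  set f : E → ℝ :=
    fun y => CC + -(‖y‖^2 - ⟪e, y⟫^2)/(2*t) + Real.log (Fs w t ⟪e, y⟫) with hf
  have hcl : ContDiff ℝ 2 (fun y : E => ⟪e, y⟫) := (innerSL ℝ e).contDiff
  have hcd : ContDiff ℝ 2 f := by
    apply ContDiff.add
    · apply ContDiff.add contDiff_const
      exact (((contDiff_norm_sq ℝ).sub (hcl.pow 2)).neg).div_const _
    · exact ((contDiff_Fs ht hw hw0').log (fun u => (hFpos u).ne')).comp hcl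
  set g : ℝ →L[ℝ] E := ContinuousLinearMap.toSpanSingleton ℝ e with hg
  have hee : ⟪e, e⟫ = (1:ℝ) := by
    rw [real_inner_self_eq_norm_sq, he, one_pow]
  have hcomp := g.iteratedFDeriv_comp_right hcd s (le_refl 2)
  have happ := congrArg
    (fun Q : ContinuousMultilinearMap ℝ (fun _ : Fin 2 => ℝ) ℝ => Q ![1, 1]) hcomp
  simp only [ContinuousMultilinearMap.compContinuousLinearMap_apply] at happ
  have hmm : (fun i : Fin 2 => g (![ (1:ℝ), 1 ] i)) = ![e, e] := by
    funext i
    fin_cases i <;> simp [hg, ContinuousLinearMap.toSpanSingleton_apply]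
  rw [hmm] at happ
  have hgs : g s = s • e := ContinuousLinearMap.toSpanSingleton_apply ℝ e s
  rw [hgs] at happ
  rw [← happ]
  -- now compute the 1-d iterated derivative
  have hfg : (f ∘ g) = fun u : ℝ => CC + Real.log (Fs w t u) := by
    funext u
    have h1 : ⟪e, g u⟫ = u := by
      rw [hg, ContinuousLinearMap.toSpanSingleton_apply, real_inner_smul_right, hee,
        mul_one]
    have h2 : ‖g u‖^2 = u^2 := by
      rw [hg, ContinuousLinearMap.toSpanSingleton_apply, norm_smul, he, mul_one,
        Real.norm_eq_abs, sq_abs]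
    simp only [Function.comp_apply, hf, h1, h2, sub_self, neg_zero, zero_div, add_zero]
  have h11 : (![ (1:ℝ), 1 ]) = (fun _ : Fin 2 => (1:ℝ)) := by
    funext i
    fin_cases i <;> rfl
  rw [h11, ← iteratedDeriv_eq_iteratedFDeriv, hfg]
  have hderiv1 : (deriv fun u => CC + Real.log (Fs w t u))
      = fun u => F1 w t u / Fs w t u := by
    funext u
    exact (((hasDerivAt_Fs ht hw hw0' u).log (hFpos u).ne').const_add CC).deriv
  have hd2 := ((hasDerivAt_F1 ht hw hw0' s).fun_div (hasDerivAt_Fs ht hw hw0' s)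
    (hFpos s).ne').deriv
  rw [show (2:ℕ) = 1 + 1 from rfl, iteratedDeriv_succ, iteratedDeriv_one, hderiv1, hd2]
  ring

end dimE

end NLC


/-- **Negative result in arbitrary dimension.** For every `d ≥ 1` and non-decreasing
`Ψ : ℝ_{≥0} → ℝ_{≥0}` there is a probability measure `μ` on `ℝ^d` with
`∫ e^{Ψ(‖x‖)} dμ(x) < ∞` such that for every `t > 0`
`inf_{z, ‖w‖=1} ⟨w, -∇² log(μ*γ_t)(z) w⟩ = -∞`. -/
theorem no_log_concavity_from_tail_decay_multidim
    (d : ℕ) (hd : 1 ≤ d)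
    (Ψ : ℝ → ℝ) (hmono : MonotoneOn Ψ (Set.Ici 0))
    (hnonneg : ∀ x ∈ Set.Ici (0 : ℝ), 0 ≤ Ψ x) :
    ∃ μ : Measure (EuclideanSpace ℝ (Fin d)), IsProbabilityMeasure μ ∧
      Integrable (fun x => Real.exp (Ψ ‖x‖)) μ ∧
      ∀ t : ℝ, 0 < t →
        ¬ BddBelow {r : ℝ | ∃ z w : EuclideanSpace ℝ (Fin d), ‖w‖ = 1 ∧
            r = -(iteratedFDeriv ℝ 2 (fun y => Real.log (heatConvMeas μ t y)) z ![w, w])} := by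
  classical
  -- the unit direction
  set e : EuclideanSpace ℝ (Fin d) := EuclideanSpace.single (⟨0, hd⟩ : Fin d) (1:ℝ) with he_def
  have he : ‖e‖ = 1 := by
    rw [he_def, EuclideanSpace.norm_single, norm_one]
  have hee : ⟪e, e⟫ = (1:ℝ) := by
    rw [real_inner_self_eq_norm_sq, he, one_pow]
  -- the weights
  set a : ℕ → ℝ := fun k => Real.exp (-(Ψ (NLC.xpt k))) * (1/2)^(k+1) with ha_def
  have ha_pos : ∀ k, 0 < a k := fun k => by positivity
  have hPsi : ∀ k, 0 ≤ Ψ (NLC.xpt k) := fun k => hnonneg _ (NLC.xpt_nonneg k)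
  have ha_le : ∀ k, a k ≤ (1/2)^(k+1) := by
    intro k
    rw [ha_def]
    have h1 : Real.exp (-(Ψ (NLC.xpt k))) ≤ 1 := by
      rw [Real.exp_le_one_iff]
      linarith [hPsi k]
    calc Real.exp (-(Ψ (NLC.xpt k))) * (1/2)^(k+1) ≤ 1 * (1/2:ℝ)^(k+1) :=
          mul_le_mul_of_nonneg_right h1 (by positivity)
      _ = (1/2)^(k+1) := one_mul _
  have hgeo : Summable (fun k : ℕ => ((1:ℝ)/2)^(k+1)) := by
    apply Summable.congr ((summable_geometric_of_lt_one (by norm_num) (by norm_num :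
      (1:ℝ)/2 < 1)).mul_right (1/2))
    intro k
    rw [pow_succ]
  have hasum : Summable a :=
    Summable.of_nonneg_of_le (fun k => (ha_pos k).le) ha_le hgeo
  set S := ∑' k, a k with hS_def
  have hSpos : 0 < S := Summable.tsum_pos hasum (fun k => (ha_pos k).le) 0 (ha_pos 0)
  set wt : ℕ → ℝ := fun k => a k / S with hwt_def
  have hw0 : ∀ k, 0 < wt k := fun k => div_pos (ha_pos k) hSpos
  have hw0' : ∀ k, 0 ≤ wt k := fun k => (hw0 k).le
  have hw : Summable wt := hasum.div_const S
  have hw1 : ∑' k, wt k = 1 := by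
    rw [hwt_def, tsum_div_const, ← hS_def, div_self hSpos.ne']
  -- the measure
  set μ : Measure (EuclideanSpace ℝ (Fin d)) :=
    Measure.sum (fun k : ℕ => (ENNReal.ofReal (wt k)) • Measure.dirac ((NLC.xpt k) • e))
    with hμ_def
  have hprob : IsProbabilityMeasure μ := by
    constructor
    rw [hμ_def, Measure.sum_apply _ MeasurableSet.univ]
    simp only [Measure.smul_apply, measure_univ, smul_eq_mul, mul_one]
    rw [← ENNReal.ofReal_tsum_of_nonneg hw0' hw, hw1, ENNReal.ofReal_one]
  haveI := hprob
  refine ⟨μ, hprob, ?_, ?_⟩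
  · -- integrability
    set D : Set (EuclideanSpace ℝ (Fin d)) := Set.range (fun k : ℕ => (NLC.xpt k) • e) with hD_def
    have hDc : D.Countable := Set.countable_range _
    have hDm : MeasurableSet D := hDc.measurableSet
    have hμDc : μ Dᶜ = 0 := by
      rw [hμ_def, Measure.sum_apply _ hDm.compl]
      have : ∀ k : ℕ, (ENNReal.ofReal (wt k)) • Measure.dirac ((NLC.xpt k) • e) Dᶜ
          = 0 := by
        intro k
        have hmem : (NLC.xpt k) • e ∈ D := Set.mem_range_self k
        simp only [Measure.smul_apply, smul_eq_mul]
        rw [Measure.dirac_apply' _ hDm.compl, Set.indicator_of_notMem (by simpa using hmem)]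
        simp
      exact (tsum_congr this).trans tsum_zero
    set f : EuclideanSpace ℝ (Fin d) → ℝ := fun x => Real.exp (Ψ ‖x‖) with hf_def
    set g : EuclideanSpace ℝ (Fin d) → ℝ := D.indicator f with hg_def
    have hgm : Measurable g := by
      intro s _
      by_cases h0 : (0:ℝ) ∈ s
      · have : g ⁻¹' s = (D ∩ g ⁻¹' s) ∪ Dᶜ := by
          ext x
          constructor
          · intro hx
            by_cases hxD : x ∈ D
            · exact Or.inl ⟨hxD, hx⟩
            · exact Or.inr hxD
          · rintro (⟨_, hx⟩ | hx)
            · exact hx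
            · show g x ∈ s
              rw [hg_def, Set.indicator_of_notMem hx]
              exact h0
        rw [this]
        exact ((hDc.mono Set.inter_subset_left).measurableSet).union hDm.compl
      · have : g ⁻¹' s = D ∩ g ⁻¹' s := by
          apply Set.Subset.antisymm _ Set.inter_subset_right
          intro x hx
          refine ⟨?_, hx⟩
          by_contra hxD
          have hx' : g x ∈ s := hx
          have hzero : g x = 0 := by rw [hg_def, Set.indicator_of_notMem hxD]
          rw [hzero] at hx'
          exact h0 hx'
        rw [this]
        exact (hDc.mono Set.inter_subset_left).measurableSet
    have haesm : AEStronglyMeasurable f μ := by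
      refine ⟨g, hgm.stronglyMeasurable, ?_⟩
      apply Filter.eventuallyEq_of_mem (s := D) _ (fun x hx => by
        rw [hg_def, Set.indicator_of_mem hx])
      rw [mem_ae_iff]
      simpa using hμDc
    refine ⟨haesm, ?_⟩
    show ∫⁻ x, ‖f x‖₊ ∂μ < ⊤
    rw [hμ_def, lintegral_sum_measure]
    have hterm : ∀ k : ℕ, ∫⁻ x, (‖f x‖₊ : ℝ≥0∞)
          ∂((ENNReal.ofReal (wt k)) • Measure.dirac ((NLC.xpt k) • e))
        = ENNReal.ofReal ((1/2)^(k+1)/S) := by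
      intro k
      rw [lintegral_smul_measure, lintegral_dirac]
      have hnorm : ‖(NLC.xpt k) • e‖ = NLC.xpt k := by
        rw [norm_smul, he, mul_one, Real.norm_eq_abs, abs_of_nonneg (NLC.xpt_nonneg k)]
      have hval : f ((NLC.xpt k) • e) = Real.exp (Ψ (NLC.xpt k)) := by
        simp only [hf_def]
        rw [hnorm]
      rw [hval]
      have : (‖Real.exp (Ψ (NLC.xpt k))‖₊ : ℝ≥0∞)
          = ENNReal.ofReal (Real.exp (Ψ (NLC.xpt k))) := by
        rw [← enorm_eq_nnnorm, ← ofReal_norm, Real.norm_eq_abs,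
          abs_of_pos (Real.exp_pos _)]
      rw [this, smul_eq_mul, ← ENNReal.ofReal_mul (hw0' k)]
      congr 1
      rw [hwt_def, ha_def]
      rw [div_mul_eq_mul_div, mul_assoc, mul_comm ((1/2:ℝ)^(k+1)), ← mul_assoc,
        ← Real.exp_add, neg_add_cancel, Real.exp_zero, one_mul]
    rw [tsum_congr hterm]
    rw [← ENNReal.ofReal_tsum_of_nonneg (fun k => by positivity) (hgeo.div_const S)]
    exact ENNReal.ofReal_lt_top
  · -- main negative statement
    intro t ht hbdd
    obtain ⟨L, hL⟩ := hbdd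
    obtain ⟨s, hs⟩ := NLC.phi2_large (w := wt) ht hw hw0 hw1 (-L + 1)
    set CC : ℝ := Real.log ((2 * π * t) ^ (-(d : ℝ) / 2)) with hCC
    have hcdpos : (0:ℝ) < (2 * π * t) ^ (-(d : ℝ) / 2) :=
      Real.rpow_pos_of_pos (by positivity) _
    have hFpos := NLC.Fs_pos (w := wt) ht hw hw0
    -- representation of the heat convolution
    have hrep : ∀ z : EuclideanSpace ℝ (Fin d), heatConvMeas μ t z
        = (2 * π * t) ^ (-(d : ℝ) / 2) *
          (Real.exp (-(‖z‖^2 - ⟪e, z⟫^2)/(2*t)) * NLC.Fs wt t ⟪e, z⟫) := by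
      intro z
      have hcont : Continuous (fun x => gaussDensity t (z - x)) := by
        apply continuous_const.mul
        apply Real.continuous_exp.comp
        apply Continuous.div_const
        exact ((continuous_const.sub continuous_id).norm.pow 2).neg
      have hbound : ∀ x, ‖gaussDensity t (z - x)‖ ≤ (2 * π * t) ^ (-(d : ℝ) / 2) := by
        intro x
        rw [gaussDensity, Real.norm_eq_abs, abs_mul, abs_of_pos hcdpos,
          abs_of_pos (Real.exp_pos _)]
        calc (2 * π * t) ^ (-(d : ℝ) / 2) * Real.exp (-‖z - x‖^2/(2*t))
            ≤ (2 * π * t) ^ (-(d : ℝ) / 2) * 1 := by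
              apply mul_le_mul_of_nonneg_left _ hcdpos.le
              rw [Real.exp_le_one_iff]
              apply div_nonpos_of_nonpos_of_nonneg _ (by linarith)
              simp only [neg_nonpos]
              positivity
          _ = (2 * π * t) ^ (-(d : ℝ) / 2) := mul_one _
      have hint : Integrable (fun x => gaussDensity t (z - x)) μ := by
        apply Integrable.mono' (integrable_const ((2 * π * t) ^ (-(d : ℝ) / 2)))
          hcont.aestronglyMeasurable
        exact Filter.Eventually.of_forall hbound
      rw [heatConvMeas, hμ_def, integral_sum_measure (by rwa [← hμ_def])]
      have hterm : ∀ k : ℕ, ∫ x, gaussDensity t (z - x)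
            ∂((ENNReal.ofReal (wt k)) • Measure.dirac ((NLC.xpt k) • e))
          = ((2 * π * t) ^ (-(d : ℝ) / 2) * Real.exp (-(‖z‖^2 - ⟪e, z⟫^2)/(2*t)))
            * NLC.term0 wt t k ⟪e, z⟫ := by
        intro k
        rw [integral_smul_measure, integral_dirac, ENNReal.toReal_ofReal (hw0' k),
          smul_eq_mul]
        rw [gaussDensity, NLC.term0, NLC.gker]
        have hnorm : ‖z - (NLC.xpt k) • e‖^2
            = (‖z‖^2 - ⟪e, z⟫^2) + (⟪e, z⟫ - NLC.xpt k)^2 := by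
          rw [norm_sub_sq_real, real_inner_smul_right, norm_smul, he, mul_one,
            Real.norm_eq_abs, sq_abs, real_inner_comm]
          ring
        rw [hnorm, show -(((‖z‖^2 - ⟪e, z⟫^2) + (⟪e, z⟫ - NLC.xpt k)^2))/(2*t)
            = -(‖z‖^2 - ⟪e, z⟫^2)/(2*t) + -(⟪e, z⟫ - NLC.xpt k)^2/(2*t) from by ring,
          Real.exp_add]
        ring
      rw [tsum_congr hterm, tsum_mul_left, NLC.Fs]
      ring
    have hfun : (fun y => Real.log (heatConvMeas μ t y))
        = fun y => CC + -(‖y‖^2 - ⟪e, y⟫^2)/(2*t) + Real.log (NLC.Fs wt t ⟪e, y⟫) := by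
      funext y
      rw [hrep y, Real.log_mul hcdpos.ne'
        (mul_pos (Real.exp_pos _) (hFpos ⟪e, y⟫)).ne',
        Real.log_mul (Real.exp_pos _).ne' (hFpos ⟪e, y⟫).ne', Real.log_exp, hCC,
        ← add_assoc]
    have hiter : iteratedFDeriv ℝ 2 (fun y => Real.log (heatConvMeas μ t y))
        (s • e) ![e, e]
        = (NLC.F2 wt t s * NLC.Fs wt t s - (NLC.F1 wt t s)^2) / (NLC.Fs wt t s)^2 := by
      rw [hfun]
      exact NLC.iterated_main ht hw hw0 e he CC s
    have hmemS : -( (NLC.F2 wt t s * NLC.Fs wt t s - (NLC.F1 wt t s)^2) / (NLC.Fs wt t s)^2)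
        ∈ {r : ℝ | ∃ z w : EuclideanSpace ℝ (Fin d), ‖w‖ = 1 ∧
            r = -(iteratedFDeriv ℝ 2 (fun y => Real.log (heatConvMeas μ t y)) z ![w, w])} := by
      exact ⟨s • e, e, he, by rw [hiter]⟩
    have := hL hmemS
    linarith
end
end

section
/- Let U ∈ C²(ℝ^d) be such that for some α, β, R ≥ 0 one has ∇²U(x) ≽ α·I_d whenever ‖x‖ ≥ R and ∇²U(x) ≽ −β·I_d whenever ‖x‖ < R. Then there exist V, H ∈ C¹(ℝ^d) with U = V + H, such that V is α-convex and H is 2(α+β)R-Lipschitz. -/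
noncomputable section
open Real MeasureTheory

section AuxDecomp
open Set
open scoped RealInnerProductSpace

variable {E : Type*} [NormedAddCommGroup E] [InnerProductSpace ℝ E]

/-- the line `t ↦ x + t • v` -/
lemma hasDerivAt_line (x v : E) (t : ℝ) : HasDerivAt (fun t : ℝ => x + t • v) v t := by
  simpa using ((hasDerivAt_id t).smul_const v).const_add x

lemma hasDerivAt_U_line {U : E → ℝ} (hU : Differentiable ℝ U) (x v : E) (t : ℝ) :
    HasDerivAt (fun t : ℝ => U (x + t • v)) (fderiv ℝ U (x + t • v) v) t :=
  (hU (x + t • v)).hasFDerivAt.comp_hasDerivAt t (hasDerivAt_line x v t)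

lemma hasDerivAt_A_line {U : E → ℝ} (hU : ContDiff ℝ 2 U) (x v : E) (t : ℝ) :
    HasDerivAt (fun t : ℝ => fderiv ℝ U (x + t • v) v)
      (iteratedFDeriv ℝ 2 U (x + t • v) ![v, v]) t := by
  have hF : ContDiff ℝ 1 (fderiv ℝ U) := hU.fderiv_right (le_refl 2)
  have h1 : HasDerivAt (fun t : ℝ => fderiv ℝ U (x + t • v))
      (fderiv ℝ (fderiv ℝ U) (x + t • v) v) t :=
    ((hF.differentiable one_ne_zero) (x + t • v)).hasFDerivAt.comp_hasDerivAt t (hasDerivAt_line x v t)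
  have h2 := h1.clm_apply (hasDerivAt_const t v)
  simp only [smul_zero, map_zero, add_zero] at h2
  rw [iteratedFDeriv_two_apply]
  simpa using h2

lemma hasDerivAt_P_line (x v : E) (t : ℝ) :
    HasDerivAt (fun t : ℝ => ⟪x + t • v, v⟫) (‖v‖ ^ 2) t := by
  have := ((hasDerivAt_line x v t).inner ℝ (hasDerivAt_const t v))
  simpa [real_inner_self_eq_norm_sq] using this

lemma hasDerivAt_normsq_line (x v : E) (t : ℝ) :
    HasDerivAt (fun t : ℝ => ‖x + t • v‖ ^ 2) (2 * ⟪x + t • v, v⟫) t := by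
  have := ((hasDerivAt_line x v t).inner ℝ (hasDerivAt_line x v t))
  have h2 : (fun t : ℝ => ‖x + t • v‖ ^ 2) = fun t : ℝ => ⟪x + t • v, x + t • v⟫ := by
    funext s; rw [real_inner_self_eq_norm_sq]
  rw [h2]
  refine this.congr_deriv ?_
  rw [real_inner_comm]; ring

lemma hasDerivAt_norm_line (x v : E) (t : ℝ) (h : x + t • v ≠ 0) :
    HasDerivAt (fun t : ℝ => ‖x + t • v‖) (⟪x + t • v, v⟫ / ‖x + t • v‖) t := by
  have hq : (fun t : ℝ => ‖x + t • v‖) = fun t : ℝ => Real.sqrt (‖x + t • v‖ ^ 2) := by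
    funext s; rw [Real.sqrt_sq (norm_nonneg _)]
  have h0 : ‖x + t • v‖ ≠ 0 := norm_ne_zero_iff.mpr h
  have hne : ‖x + t • v‖ ^ 2 ≠ 0 := pow_ne_zero 2 h0
  have := (Real.hasDerivAt_sqrt hne).comp t (hasDerivAt_normsq_line x v t)
  rw [hq]
  refine this.congr_deriv ?_
  rw [Real.sqrt_sq (norm_nonneg _)]
  field_simp

lemma monotone_of_three {f : ℝ → ℝ} {a b : ℝ} (hab : a ≤ b)
    (h1 : MonotoneOn f (Set.Iic a)) (h2 : MonotoneOn f (Set.Icc a b))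
    (h3 : MonotoneOn f (Set.Ici b)) : Monotone f := by
  intro s t hst
  rcases le_total t a with hta | hat
  · exact h1 (Set.mem_Iic.mpr (hst.trans hta)) (Set.mem_Iic.mpr hta) hst
  rcases le_total b s with hbs | hsb
  · exact h3 (Set.mem_Ici.mpr hbs) (Set.mem_Ici.mpr (hbs.trans hst)) hst
  have hs : f s ≤ f (max s a) := by
    rcases le_total s a with h | h
    · exact h1 (Set.mem_Iic.mpr h) (Set.mem_Iic.mpr (max_le h le_rfl)) (le_max_left s a)
    · simp [max_eq_left h]
  have ht : f (min t b) ≤ f t := by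
    rcases le_total b t with h | h
    · exact h3 (Set.mem_Ici.mpr (le_min h le_rfl)) (Set.mem_Ici.mpr h) (min_le_left t b)
    · simp [min_eq_left h]
  have hmid : f (max s a) ≤ f (min t b) :=
    h2 ⟨le_max_right s a, max_le hsb hab⟩ ⟨le_min hat hab, min_le_right t b⟩
      (max_le (le_min hst hsb) (le_min hat hab))
  exact hs.trans (hmid.trans ht)

lemma norm_combo_sq (p w : E) (l : ℝ) :
    ‖(1 - l) • p + l • w‖ ^ 2
      = (1 - l) * ‖p‖ ^ 2 + l * ‖w‖ ^ 2 - l * (1 - l) * ‖p - w‖ ^ 2 := by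
  have h1 : ‖(1 - l) • p + l • w‖ ^ 2 = ⟪(1 - l) • p + l • w, (1 - l) • p + l • w⟫ :=
    (real_inner_self_eq_norm_sq _).symm
  have h2 : ‖p - w‖ ^ 2 = ⟪p - w, p - w⟫ := (real_inner_self_eq_norm_sq _).symm
  have h3 : ‖p‖ ^ 2 = ⟪p, p⟫ := (real_inner_self_eq_norm_sq _).symm
  have h4 : ‖w‖ ^ 2 = ⟪w, w⟫ := (real_inner_self_eq_norm_sq _).symm
  rw [h1, h2, h3, h4]
  simp only [inner_add_add_self, inner_sub_sub_self, real_inner_smul_left,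
    real_inner_smul_right]
  have := real_inner_comm p w
  ring_nf


lemma monotone_of_regions {R : ℝ} (hR : 0 ≤ R) (x v : E) (hv : v ≠ 0) {f : ℝ → ℝ}
    (hf : Continuous f)
    (hinn : ∀ t, ‖x + t • v‖ < R → DifferentiableAt ℝ f t ∧ 0 ≤ deriv f t)
    (hout : ∀ t, R < ‖x + t • v‖ → DifferentiableAt ℝ f t ∧ 0 ≤ deriv f t) :
    Monotone f := by
  set γ : ℝ → E := fun t => x + t • v with hγ
  set S : Set ℝ := {t | ‖γ t‖ ≤ R} with hS
  have hγc : Continuous γ := by continuity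
  have hclosed : IsClosed S := isClosed_le (by continuity) continuous_const
  have hvpos : (0:ℝ) < ‖v‖ := norm_pos_iff.mpr hv
  have hbdd : ∀ t ∈ S, |t| ≤ (R + ‖x‖) / ‖v‖ := by
    intro t ht
    rw [le_div_iff₀ hvpos]
    have h1 : ‖t • v‖ ≤ ‖γ t‖ + ‖x‖ := by
      have : t • v = γ t - x := by simp [hγ]
      rw [this]
      exact (norm_sub_le _ _).trans (by simp)
    have h2 : ‖t • v‖ = |t| * ‖v‖ := by rw [norm_smul, Real.norm_eq_abs]
    have := ht
    simp only [hS, Set.mem_setOf_eq] at this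
    nlinarith
  rcases Set.eq_empty_or_nonempty S with hemp | hne
  · -- everything outside
    have hall : ∀ t, R < ‖γ t‖ := by
      intro t
      by_contra h
      exact (Set.eq_empty_iff_forall_notMem.mp hemp t) (le_of_not_gt h)
    exact monotone_of_deriv_nonneg (fun t => (hout t (hall t)).1) (fun t => (hout t (hall t)).2)
  · have hbb : BddBelow S := ⟨-((R + ‖x‖) / ‖v‖), fun t ht => neg_le_of_abs_le (hbdd t ht)⟩
    have hba : BddAbove S := ⟨(R + ‖x‖) / ‖v‖, fun t ht => le_of_abs_le (hbdd t ht)⟩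
    set a := sInf S with ha
    set b := sSup S with hb
    have haS : a ∈ S := hclosed.csInf_mem hne hbb
    have hbS : b ∈ S := hclosed.csSup_mem hne hba
    have hab : a ≤ b := csInf_le_csSup hne hbb hba
    have hmid : ∀ t ∈ Set.Ioo a b, ‖γ t‖ < R := by
      intro t ht
      have hba' : (0:ℝ) < b - a := sub_pos.mpr (ht.1.trans ht.2)
      set l : ℝ := (t - a) / (b - a) with hl
      have hl0 : 0 < l := div_pos (sub_pos.mpr ht.1) hba'
      have hl1 : l < 1 := (div_lt_one hba').mpr (sub_lt_sub_right ht.2 a)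
      have hteq : t = (1 - l) * a + l * b := by
        rw [hl]
        field_simp
        ring
      have hcombo : γ t = (1 - l) • γ a + l • γ b := by
        simp only [hγ]
        rw [hteq]
        module
      have hsq := norm_combo_sq (γ a) (γ b) l
      rw [← hcombo] at hsq
      have hdiff : γ a - γ b = (a - b) • v := by simp [hγ]; module
      have hdn : ‖γ a - γ b‖ ^ 2 = (a - b) ^ 2 * ‖v‖ ^ 2 := by
        rw [hdiff, norm_smul, Real.norm_eq_abs, mul_pow, sq_abs]
      have hpos : 0 < ‖γ a - γ b‖ ^ 2 := by
        rw [hdn]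
        have : a - b ≠ 0 := by nlinarith
        positivity
      have hga : ‖γ a‖ ≤ R := haS
      have hgb : ‖γ b‖ ≤ R := hbS
      have ha2 : ‖γ a‖ ^ 2 ≤ R ^ 2 := pow_le_pow_left₀ (norm_nonneg _) hga 2
      have hb2 : ‖γ b‖ ^ 2 ≤ R ^ 2 := pow_le_pow_left₀ (norm_nonneg _) hgb 2
      have e1 : (1 - l) * ‖γ a‖ ^ 2 ≤ (1 - l) * R ^ 2 :=
        mul_le_mul_of_nonneg_left ha2 (by linarith)
      have e2 : l * ‖γ b‖ ^ 2 ≤ l * R ^ 2 :=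
        mul_le_mul_of_nonneg_left hb2 hl0.le
      have e3 : 0 < l * (1 - l) * ‖γ a - γ b‖ ^ 2 :=
        mul_pos (mul_pos hl0 (by linarith)) hpos
      have hlt : ‖γ t‖ ^ 2 < R ^ 2 := by linarith
      by_contra hcon
      push_neg at hcon
      have : R ^ 2 ≤ ‖γ t‖ ^ 2 := pow_le_pow_left₀ hR hcon 2
      linarith
    have h1 : MonotoneOn f (Set.Iic a) := by
      apply monotoneOn_of_deriv_nonneg (convex_Iic a) hf.continuousOn
      · rw [interior_Iic]
        intro t ht
        have : R < ‖γ t‖ := by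
          by_contra h
          exact absurd (csInf_le hbb (le_of_not_gt h : ‖γ t‖ ≤ R)) (not_le.mpr ht)
        exact (hout t this).1.differentiableWithinAt
      · rw [interior_Iic]
        intro t ht
        have : R < ‖γ t‖ := by
          by_contra h
          exact absurd (csInf_le hbb (le_of_not_gt h : ‖γ t‖ ≤ R)) (not_le.mpr ht)
        exact (hout t this).2
    have h3 : MonotoneOn f (Set.Ici b) := by
      apply monotoneOn_of_deriv_nonneg (convex_Ici b) hf.continuousOn
      · rw [interior_Ici]
        intro t ht
        have : R < ‖γ t‖ := by
          by_contra h
          exact absurd (le_csSup hba (le_of_not_gt h : ‖γ t‖ ≤ R)) (not_le.mpr ht)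
        exact (hout t this).1.differentiableWithinAt
      · rw [interior_Ici]
        intro t ht
        have : R < ‖γ t‖ := by
          by_contra h
          exact absurd (le_csSup hba (le_of_not_gt h : ‖γ t‖ ≤ R)) (not_le.mpr ht)
        exact (hout t this).2
    have h2 : MonotoneOn f (Set.Icc a b) := by
      apply monotoneOn_of_deriv_nonneg (convex_Icc a b) hf.continuousOn
      · rw [interior_Icc]
        exact fun t ht => (hinn t (hmid t ht)).1.differentiableWithinAt
      · rw [interior_Icc]
        exact fun t ht => (hinn t (hmid t ht)).2
    exact monotone_of_three hab h1 h2 h3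

lemma convexOn_univ_of_line_mono {W : E → ℝ} (hW : Differentiable ℝ W)
    (hmono : ∀ x v : E, Monotone (deriv (fun t : ℝ => W (x + t • v)))) :
    ConvexOn ℝ Set.univ W := by
  refine ⟨convex_univ, fun x _ y _ a b ha hb hab => ?_⟩
  set u : ℝ → ℝ := fun t => W (x + t • (y - x)) with hu
  have hud : Differentiable ℝ u := by
    intro t
    exact ((hW _).hasFDerivAt.comp_hasDerivAt t
      (hasDerivAt_line x (y - x) t)).differentiableAt
  have hconv : ConvexOn ℝ Set.univ u :=
    Monotone.convexOn_univ_of_deriv hud (hmono x (y - x))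
  have key := hconv.2 (Set.mem_univ (0:ℝ)) (Set.mem_univ (1:ℝ)) ha hb hab
  have h0 : u 0 = W x := by simp [hu]
  have h1 : u 1 = W y := by simp [hu]
  have h2 : u (a • (0:ℝ) + b • 1) = W (a • x + b • y) := by
    have hx : x + (a • (0:ℝ) + b • (1:ℝ)) • (y - x) = a • x + b • y := by
      have hba : a = 1 - b := by linarith
      rw [hba]; simp; module
    rw [hu]; simp only [hx]
  rw [h0, h1, h2] at key
  simpa using key

lemma hasDerivAt_maxsq (t : ℝ) :
    HasDerivAt (fun t : ℝ => max t 0 ^ 2) (2 * max t 0) t := by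
  rcases lt_trichotomy t 0 with h | h | h
  · have hev : (fun t : ℝ => max t 0 ^ 2) =ᶠ[nhds t] fun _ => (0:ℝ) := by
      filter_upwards [eventually_lt_nhds h] with s hs
      rw [max_eq_right hs.le]; norm_num
    rw [max_eq_right h.le]
    simpa using (hasDerivAt_const t (0:ℝ)).congr_of_eventuallyEq hev
  · subst h
    have hsl : ∀ s : ℝ, s ≠ 0 → slope (fun t : ℝ => max t 0 ^ 2) 0 s = max s 0 := by
      intro s hs
      rcases le_total s 0 with h | h
      · simp [slope, max_eq_right h]
      · rw [slope_def_field, max_eq_left h, max_self]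
        field_simp
        ring
    have h0 : (2 : ℝ) * max 0 0 = 0 := by norm_num
    rw [h0, hasDerivAt_iff_tendsto_slope]
    have hev : (fun s : ℝ => max s 0) =ᶠ[nhdsWithin (0:ℝ) {(0:ℝ)}ᶜ]
        slope (fun t : ℝ => max t 0 ^ 2) 0 := by
      filter_upwards [self_mem_nhdsWithin] with s hs
      exact (hsl s hs).symm
    have hcont : Filter.Tendsto (fun s : ℝ => max s 0) (nhdsWithin (0:ℝ) {(0:ℝ)}ᶜ)
        (nhds (0:ℝ)) := by
      have hc : Continuous (fun s : ℝ => max s 0) := continuous_id.max continuous_const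
      have := (hc.tendsto (0:ℝ)).mono_left (nhdsWithin_le_nhds (s := {(0:ℝ)}ᶜ))
      simpa using this
    exact Filter.Tendsto.congr' hev hcont
  · have hev : (fun t : ℝ => max t 0 ^ 2) =ᶠ[nhds t] fun s => s ^ 2 := by
      filter_upwards [eventually_gt_nhds h] with s hs
      rw [max_eq_left hs.le]
    rw [max_eq_left h.le]
    have hp : HasDerivAt (fun s : ℝ => s ^ 2) (2 * t) t := by
      simpa using hasDerivAt_pow 2 t
    exact hp.congr_of_eventuallyEq hev
lemma contDiff_maxsq : ContDiff ℝ 1 (fun t : ℝ => max t 0 ^ 2) := by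
  rw [contDiff_one_iff_deriv]
  have hd : deriv (fun t : ℝ => max t 0 ^ 2) = fun t => 2 * max t 0 := by
    funext t; exact (hasDerivAt_maxsq t).deriv
  refine ⟨fun t => (hasDerivAt_maxsq t).differentiableAt, ?_⟩
  rw [hd]
  exact continuous_const.mul (continuous_id.max continuous_const)

/-- the 1-d profile -/
def psiR (R s : ℝ) : ℝ := s / 2 - max (Real.sqrt s - R) 0 ^ 2 / 2

/-- the correction function -/
def phiR (R : ℝ) (z : E) : ℝ := psiR R (‖z‖ ^ 2)

lemma phiR_eq_G (R : ℝ) (z : E) :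
    phiR R z = ‖z‖ ^ 2 / 2 - max (‖z‖ - R) 0 ^ 2 / 2 := by
  rw [phiR, psiR, Real.sqrt_sq (norm_nonneg z)]

lemma phiR_in {R : ℝ} {z : E} (h : ‖z‖ ≤ R) : phiR R z = ‖z‖ ^ 2 / 2 := by
  rw [phiR_eq_G, max_eq_right (by linarith)]
  norm_num

lemma phiR_out {R : ℝ} {z : E} (h : R ≤ ‖z‖) : phiR R z = R * ‖z‖ - R ^ 2 / 2 := by
  rw [phiR_eq_G, max_eq_left (by linarith)]
  ring

lemma contDiff_phiR {R : ℝ} (hR : 0 < R) : ContDiff ℝ 1 (phiR R : E → ℝ) := by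
  rw [contDiff_iff_contDiffAt]
  intro z
  rcases lt_or_ge ‖z‖ R with h | h
  · have hev : (phiR R : E → ℝ) =ᶠ[nhds z] fun w => ‖w‖ ^ 2 / 2 := by
      have hopen : IsOpen {w : E | ‖w‖ < R} := isOpen_lt continuous_norm continuous_const
      filter_upwards [hopen.mem_nhds h] with w hw
      exact phiR_in (le_of_lt hw)
    exact (((contDiff_norm_sq ℝ).div_const 2).contDiffAt (n := 1)).congr_of_eventuallyEq hev
  · have hz0 : (0:ℝ) < ‖z‖ := lt_of_lt_of_le hR h
    have hpos : (0:ℝ) < ‖z‖ ^ 2 := by positivity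
    have hψ : ContDiffAt ℝ 1 (psiR R) (‖z‖ ^ 2) := by
      have h1 : ContDiffAt ℝ 1 (fun s : ℝ => s / 2) (‖z‖ ^ 2) :=
        (contDiff_id.div_const 2).contDiffAt
      have h2 : ContDiffAt ℝ 1 (fun s : ℝ => max (Real.sqrt s - R) 0 ^ 2 / 2) (‖z‖ ^ 2) := by
        have hs : ContDiffAt ℝ 1 (fun s : ℝ => Real.sqrt s - R) (‖z‖ ^ 2) :=
          (Real.contDiffAt_sqrt (ne_of_gt hpos)).sub contDiffAt_const
        exact ((contDiff_maxsq.contDiffAt.comp _ hs)).div_const 2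
      exact h1.sub h2
    exact hψ.comp z ((contDiff_norm_sq ℝ).contDiffAt)

lemma G_lip {R : ℝ} (hR : 0 ≤ R) {r s : ℝ} (hs : 0 ≤ s) (hsr : s ≤ r) :
    0 ≤ (r ^ 2 / 2 - max (r - R) 0 ^ 2 / 2) - (s ^ 2 / 2 - max (s - R) 0 ^ 2 / 2) ∧
      (r ^ 2 / 2 - max (r - R) 0 ^ 2 / 2) - (s ^ 2 / 2 - max (s - R) 0 ^ 2 / 2)
        ≤ R * (r - s) := by
  rcases le_total r R with hr | hr
  · rw [max_eq_right (by linarith), max_eq_right (by linarith)]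
    constructor <;> nlinarith
  · rcases le_total s R with hsR | hsR
    · rw [max_eq_left (by linarith), max_eq_right (by linarith)]
      constructor <;> nlinarith
    · rw [max_eq_left (by linarith), max_eq_left (by linarith)]
      constructor <;> nlinarith

theorem decompose_aux
    (α β R : ℝ) (hα : 0 ≤ α) (hβ : 0 ≤ β) (hR : 0 ≤ R)
    (U : E → ℝ) (hU : ContDiff ℝ 2 U)
    (hout : ∀ x : E, R ≤ ‖x‖ →
      ∀ w : E, α * ‖w‖ ^ 2 ≤ iteratedFDeriv ℝ 2 U x ![w, w])
    (hin : ∀ x : E, ‖x‖ < R →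
      ∀ w : E, -β * ‖w‖ ^ 2 ≤ iteratedFDeriv ℝ 2 U x ![w, w]) :
    ∃ V H : E → ℝ,
      ContDiff ℝ 1 V ∧ ContDiff ℝ 1 H ∧ (∀ x, U x = V x + H x) ∧
      ConvexOn ℝ Set.univ (fun x => V x - α / 2 * ‖x‖ ^ 2) ∧
      LipschitzWith (2 * (α + β) * R).toNNReal H := by
  rcases eq_or_lt_of_le hR with hR0 | hRpos
  · -- R = 0 : take V = U, H = 0
    refine ⟨U, fun _ => 0, hU.of_le one_le_two, contDiff_const, fun x => by ring, ?_, ?_⟩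
    · apply convexOn_univ_of_line_mono
      · exact (hU.differentiable two_ne_zero).sub
          (((contDiff_norm_sq ℝ).differentiable one_ne_zero).const_mul (α / 2))
      · intro x v
        have hu' : ∀ t : ℝ, HasDerivAt (fun t : ℝ => U (x + t • v) - α / 2 * ‖x + t • v‖ ^ 2)
            (fderiv ℝ U (x + t • v) v - α * ⟪x + t • v, v⟫) t := by
          intro t
          have := (hasDerivAt_U_line (hU.differentiable two_ne_zero) x v t).sub
            ((hasDerivAt_normsq_line x v t).const_mul (α / 2))
          refine this.congr_deriv ?_
          ring
        have hderiv : deriv (fun t : ℝ => U (x + t • v) - α / 2 * ‖x + t • v‖ ^ 2)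
            = fun t => fderiv ℝ U (x + t • v) v - α * ⟪x + t • v, v⟫ :=
          funext fun t => (hu' t).deriv
        rw [hderiv]
        have hg : ∀ t : ℝ, HasDerivAt (fun t : ℝ => fderiv ℝ U (x + t • v) v - α * ⟪x + t • v, v⟫)
            (iteratedFDeriv ℝ 2 U (x + t • v) ![v, v] - α * ‖v‖ ^ 2) t := fun t =>
          (hasDerivAt_A_line hU x v t).sub ((hasDerivAt_P_line x v t).const_mul α)
        apply monotone_of_deriv_nonneg (fun t => (hg t).differentiableAt)
        intro t
        rw [(hg t).deriv]
        have := hout (x + t • v) (by rw [← hR0]; exact norm_nonneg _) v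
        linarith
    · exact (LipschitzWith.const (0:ℝ)).weaken (by positivity)
  · -- R > 0
    set c : ℝ := α + β with hc
    have hc0 : 0 ≤ c := by positivity
    refine ⟨fun z => U z + c * phiR R z, fun z => -(c * phiR R z),
      (hU.of_le one_le_two).add (contDiff_const.mul (contDiff_phiR hRpos)),
      ((contDiff_const.mul (contDiff_phiR hRpos))).neg, fun x => by ring, ?_, ?_⟩
    · -- convexity
      apply convexOn_univ_of_line_mono
      · exact ((hU.differentiable two_ne_zero).add
          (((contDiff_phiR hRpos).differentiable one_ne_zero).const_mul c)).sub
          (((contDiff_norm_sq ℝ).differentiable one_ne_zero).const_mul (α / 2))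
      · intro x v
        by_cases hv : v = 0
        · subst hv
          have hcst : (fun t : ℝ => U (x + t • (0:E)) + c * phiR R (x + t • (0:E))
              - α / 2 * ‖x + t • (0:E)‖ ^ 2)
              = fun _ : ℝ => U x + c * phiR R x - α / 2 * ‖x‖ ^ 2 := by
            funext t; rw [smul_zero, add_zero]
          rw [hcst]
          have : deriv (fun _ : ℝ => U x + c * phiR R x - α / 2 * ‖x‖ ^ 2)
              = fun _ : ℝ => (0:ℝ) := by
            funext t; exact deriv_const t _
          rw [this]
          exact monotone_const
        · set γ : ℝ → E := fun t => x + t • v with hγ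
          set u : ℝ → ℝ := fun t => U (γ t) + c * phiR R (γ t) - α / 2 * ‖γ t‖ ^ 2 with hudef
          have hγc1 : ContDiff ℝ 1 (fun t : ℝ => x + t • v) :=
            contDiff_const.add (contDiff_id.smul contDiff_const)
          have huc1 : ContDiff ℝ 1 u := by
            have hW1 : ContDiff ℝ 1 (fun z : E => U z + c * phiR R z - α / 2 * ‖z‖ ^ 2) :=
              ((hU.of_le one_le_two).add (contDiff_const.mul (contDiff_phiR hRpos))).sub
                (contDiff_const.mul (contDiff_norm_sq ℝ))
            exact hW1.comp hγc1
          apply monotone_of_regions hR x v hv (huc1.continuous_deriv le_rfl)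
          · -- inside the ball
            intro t ht
            have hTopen : IsOpen ((fun s : ℝ => γ s) ⁻¹' {z : E | ‖z‖ < R}) :=
              (isOpen_lt continuous_norm continuous_const).preimage (hγc1.continuous)
            have htT : t ∈ (fun s : ℝ => γ s) ⁻¹' {z : E | ‖z‖ < R} := ht
            have hev : deriv u =ᶠ[nhds t]
                fun s => fderiv ℝ U (γ s) v + β * ⟪γ s, v⟫ := by
              filter_upwards [hTopen.mem_nhds htT] with s hs
              have huev : u =ᶠ[nhds s]
                  fun s' => U (γ s') + c * (‖γ s'‖ ^ 2 / 2) - α / 2 * ‖γ s'‖ ^ 2 := by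
                filter_upwards [hTopen.mem_nhds hs] with s' hs'
                rw [hudef]
                simp only
                rw [phiR_in (le_of_lt hs')]
              have h1 : HasDerivAt
                  (fun s' => U (γ s') + c * (‖γ s'‖ ^ 2 / 2) - α / 2 * ‖γ s'‖ ^ 2)
                  (fderiv ℝ U (γ s) v + β * ⟪γ s, v⟫) s := by
                have := ((hasDerivAt_U_line (hU.differentiable two_ne_zero) x v s).add
                  (((hasDerivAt_normsq_line x v s).const_mul (c / 2)))).sub
                  ((hasDerivAt_normsq_line x v s).const_mul (α / 2))
                convert this using 1
                · rfl
                · rfl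
                · funext s'; simp only [hγ, Pi.add_apply, Pi.sub_apply]; ring
                · simp only [hγ, hc]; ring
              exact (h1.congr_of_eventuallyEq huev).deriv
            have hg : HasDerivAt (fun s => fderiv ℝ U (γ s) v + β * ⟪γ s, v⟫)
                (iteratedFDeriv ℝ 2 U (γ t) ![v, v] + β * ‖v‖ ^ 2) t :=
              (hasDerivAt_A_line hU x v t).add ((hasDerivAt_P_line x v t).const_mul β)
            have hfin : HasDerivAt (deriv u)
                (iteratedFDeriv ℝ 2 U (γ t) ![v, v] + β * ‖v‖ ^ 2) t :=
              hg.congr_of_eventuallyEq hev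
            refine ⟨hfin.differentiableAt, ?_⟩
            rw [hfin.deriv]
            have := hin (γ t) ht v
            linarith
          · -- outside the ball
            intro t ht
            have hTopen : IsOpen ((fun s : ℝ => γ s) ⁻¹' {z : E | R < ‖z‖}) :=
              (isOpen_lt continuous_const continuous_norm).preimage (hγc1.continuous)
            have htT : t ∈ (fun s : ℝ => γ s) ⁻¹' {z : E | R < ‖z‖} := ht
            have hev : deriv u =ᶠ[nhds t]
                fun s => fderiv ℝ U (γ s) v - α * ⟪γ s, v⟫ + c * R * (⟪γ s, v⟫ / ‖γ s‖) := by
              filter_upwards [hTopen.mem_nhds htT] with s hs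
              have hsne : γ s ≠ 0 := by
                intro h0
                rw [Set.mem_preimage, Set.mem_setOf_eq, h0, norm_zero] at hs
                exact absurd hs (not_lt.mpr hRpos.le)
              have huev : u =ᶠ[nhds s]
                  fun s' => U (γ s') - α / 2 * ‖γ s'‖ ^ 2 + c * (R * ‖γ s'‖ - R ^ 2 / 2) := by
                filter_upwards [hTopen.mem_nhds hs] with s' hs'
                rw [hudef]
                simp only
                rw [phiR_out (le_of_lt hs')]
                ring
              have h1 : HasDerivAt
                  (fun s' => U (γ s') - α / 2 * ‖γ s'‖ ^ 2 + c * (R * ‖γ s'‖ - R ^ 2 / 2))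
                  (fderiv ℝ U (γ s) v - α * ⟪γ s, v⟫ + c * R * (⟪γ s, v⟫ / ‖γ s‖)) s := by
                have hn := hasDerivAt_norm_line x v s hsne
                have := ((hasDerivAt_U_line (hU.differentiable two_ne_zero) x v s).sub
                  ((hasDerivAt_normsq_line x v s).const_mul (α / 2))).add
                  (((hn.const_mul R).sub_const (R ^ 2 / 2)).const_mul c)
                refine this.congr_deriv ?_
                simp only [hγ]
                ring
              exact (h1.congr_of_eventuallyEq huev).deriv
            set N : ℝ := ‖γ t‖ with hN
            have hN0 : 0 < N := lt_trans hRpos ht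
            set P : ℝ := ⟪γ t, v⟫ with hP
            have hg : HasDerivAt
                (fun s => fderiv ℝ U (γ s) v - α * ⟪γ s, v⟫ + c * R * (⟪γ s, v⟫ / ‖γ s‖))
                (iteratedFDeriv ℝ 2 U (γ t) ![v, v] - α * ‖v‖ ^ 2
                  + c * R * ((‖v‖ ^ 2 * N - P * (P / N)) / N ^ 2)) t := by
              have hdivAt : HasDerivAt (fun s => ⟪γ s, v⟫ / ‖γ s‖)
                  ((‖v‖ ^ 2 * N - P * (P / N)) / N ^ 2) t := by
                have hne : γ t ≠ 0 := by
                  intro h0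
                  rw [hN, h0, norm_zero] at hN0
                  exact lt_irrefl 0 hN0
                exact (hasDerivAt_P_line x v t).div (hasDerivAt_norm_line x v t hne)
                  (ne_of_gt hN0)
              exact ((hasDerivAt_A_line hU x v t).sub
                ((hasDerivAt_P_line x v t).const_mul α)).add (hdivAt.const_mul (c * R))
            have hfin := hg.congr_of_eventuallyEq hev
            refine ⟨hfin.differentiableAt, ?_⟩
            rw [hfin.deriv]
            have hQ := hout (γ t) ht.le v
            have hCS : P ^ 2 ≤ ‖v‖ ^ 2 * N ^ 2 := by
              have h1 : |P| ≤ N * ‖v‖ := by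
                rw [hP, hN]; exact abs_real_inner_le_norm _ _
              have h2 := pow_le_pow_left₀ (abs_nonneg P) h1 2
              rw [sq_abs] at h2
              nlinarith
            have hD : 0 ≤ (‖v‖ ^ 2 * N - P * (P / N)) / N ^ 2 := by
              apply div_nonneg _ (by positivity)
              have : P * (P / N) = P ^ 2 / N := by ring
              rw [this, sub_nonneg, div_le_iff₀ hN0]
              nlinarith
            have h3 : 0 ≤ c * R * ((‖v‖ ^ 2 * N - P * (P / N)) / N ^ 2) :=
              mul_nonneg (mul_nonneg hc0 hRpos.le) hD
            linarith
    · -- Lipschitz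
      apply LipschitzWith.of_dist_le_mul
      intro z w
      have hcoe : ((2 * (α + β) * R).toNNReal : ℝ) = 2 * (α + β) * R :=
        Real.coe_toNNReal _ (by positivity)
      rw [hcoe, Real.dist_eq, dist_eq_norm]
      have key : ∀ p q : E, ‖q‖ ≤ ‖p‖ → |phiR R p - phiR R q| ≤ R * ‖p - q‖ := by
        intro p q hpq
        rw [phiR_eq_G, phiR_eq_G]
        have hG := G_lip (le_of_lt hRpos) (norm_nonneg q) hpq
        rw [abs_of_nonneg hG.1]
        refine hG.2.trans ?_
        exact mul_le_mul_of_nonneg_left (by simpa using norm_sub_norm_le p q) hRpos.le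
      have hbound : |phiR R z - phiR R w| ≤ R * ‖z - w‖ := by
        rcases le_total ‖w‖ ‖z‖ with h | h
        · exact key z w h
        · have := key w z h
          rw [norm_sub_rev] at this
          rw [abs_sub_comm]
          exact this
      have habs : -(c * phiR R z) - -(c * phiR R w) = c * (phiR R w - phiR R z) := by ring
      rw [habs, abs_mul, abs_of_nonneg hc0, abs_sub_comm]
      have h1 : c * |phiR R z - phiR R w| ≤ c * (R * ‖z - w‖) :=
        mul_le_mul_of_nonneg_left hbound hc0
      have h2 : 0 ≤ c * (R * ‖z - w‖) := by positivity
      rw [← hc]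
      have h3 : 2 * c * R * ‖z - w‖ = 2 * (c * (R * ‖z - w‖)) := by ring
      linarith

end AuxDecomp

/-- **Lemma 7.** If `U ∈ C²(ℝ^d)` has Hessian `≽ α I_d` outside the ball of radius `R` and
`≽ -β I_d` inside it, then `U = V + H` with `V ∈ C¹` `α`-convex and `H ∈ C¹`
`2(α+β)R`-Lipschitz. -/
theorem decompose_pos_hessian_outside_ball
    (d : ℕ) (α β R : ℝ) (hα : 0 ≤ α) (hβ : 0 ≤ β) (hR : 0 ≤ R)
    (U : EuclideanSpace ℝ (Fin d) → ℝ) (hU : ContDiff ℝ 2 U)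
    (hout : ∀ x : EuclideanSpace ℝ (Fin d), R ≤ ‖x‖ →
      ∀ w : EuclideanSpace ℝ (Fin d), α * ‖w‖ ^ 2 ≤ iteratedFDeriv ℝ 2 U x ![w, w])
    (hin : ∀ x : EuclideanSpace ℝ (Fin d), ‖x‖ < R →
      ∀ w : EuclideanSpace ℝ (Fin d), -β * ‖w‖ ^ 2 ≤ iteratedFDeriv ℝ 2 U x ![w, w]) :
    ∃ V H : EuclideanSpace ℝ (Fin d) → ℝ,
      ContDiff ℝ 1 V ∧ ContDiff ℝ 1 H ∧ (∀ x, U x = V x + H x) ∧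
      ConvexOn ℝ Set.univ (fun x => V x - α / 2 * ‖x‖ ^ 2) ∧
      LipschitzWith (2 * (α + β) * R).toNNReal H := by
  exact decompose_aux α β R hα hβ hR U hU hout hin
end
end

section
/- Let μ = Σ_{i=1}^N α_i e^{−U_i} for some N ≥ 1, weights α_i > 0, and potentials U_i ∈ C²(ℝ^d) with e^{−U_i} ∈ L¹(ℝ^d), and assume ∇²U_i(x) ≽ K·I_d for all i and all x, for some K > 0. Then at every x ∈ ℝ^d, −∇² log μ(x) ≽ K·I_d − μ(x)^{−2} Σ_{i>j} α_i α_j e^{−U_i(x)−U_j(x)} (∇U_i(x) − ∇U_j(x))^{⊗2}, where v^{⊗2} denotes the rank-one matrix v vᵀ. -/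
noncomputable section
open Real MeasureTheory
open scoped RealInnerProductSpace

open Finset in
lemma lagrange_identity {N : ℕ} (g s : Fin N → ℝ) :
    (∑ i, g i) * (∑ i, g i * s i ^ 2) - (∑ i, g i * s i) ^ 2
      = ∑ p ∈ Finset.univ.filter (fun p : Fin N × Fin N => p.2 < p.1),
          g p.1 * g p.2 * (s p.1 - s p.2) ^ 2 := by
  classical
  have hL : (∑ i, g i) * (∑ i, g i * s i ^ 2)
      = ∑ p ∈ (Finset.univ : Finset (Fin N × Fin N)), g p.1 * (g p.2 * s p.2 ^ 2) := by
    rw [← Finset.univ_product_univ, Finset.sum_product]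
    rw [Finset.sum_mul]
    exact Finset.sum_congr rfl fun i _ => by rw [Finset.mul_sum]
  have hR : (∑ i, g i * s i) ^ 2
      = ∑ p ∈ (Finset.univ : Finset (Fin N × Fin N)), (g p.1 * s p.1) * (g p.2 * s p.2) := by
    rw [sq, ← Finset.univ_product_univ, Finset.sum_product]
    rw [Finset.sum_mul]
    exact Finset.sum_congr rfl fun i _ => by rw [Finset.mul_sum]
  rw [hL, hR, ← Finset.sum_sub_distrib]
  set F : Fin N × Fin N → ℝ :=
    fun p => g p.1 * (g p.2 * s p.2 ^ 2) - (g p.1 * s p.1) * (g p.2 * s p.2) with hF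
  have hsplit := Finset.sum_filter_add_sum_filter_not
    (Finset.univ : Finset (Fin N × Fin N)) (fun p => p.2 < p.1) F
  have hsplit2 := Finset.sum_filter_add_sum_filter_not
    ((Finset.univ : Finset (Fin N × Fin N)).filter (fun p => ¬ p.2 < p.1))
    (fun p => p.1 < p.2) F
  have hdiag : ∑ p ∈ (((Finset.univ : Finset (Fin N × Fin N)).filter
      (fun p => ¬ p.2 < p.1)).filter (fun p => ¬ p.1 < p.2)), F p = 0 := by
    apply Finset.sum_eq_zero
    intro p hp
    simp only [Finset.mem_filter] at hp
    have : p.1 = p.2 := le_antisymm (not_lt.1 hp.1.2) (not_lt.1 hp.2)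
    simp only [hF, this]; ring
  have hswap : ∑ p ∈ (((Finset.univ : Finset (Fin N × Fin N)).filter
      (fun p => ¬ p.2 < p.1)).filter (fun p => p.1 < p.2)), F p
      = ∑ p ∈ ((Finset.univ : Finset (Fin N × Fin N)).filter (fun p => p.2 < p.1)),
          F p.swap := by
    apply Finset.sum_nbij' (fun p => p.swap) (fun p => p.swap)
    · intro p hp; simp only [Finset.mem_filter] at hp ⊢
      exact ⟨Finset.mem_univ _, hp.2⟩
    · intro p hp; simp only [Finset.mem_filter] at hp ⊢
      exact ⟨⟨Finset.mem_univ _, not_lt.2 hp.2.le⟩, hp.2⟩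
    · intro p _; rfl
    · intro p _; rfl
    · intro p _; rfl
  rw [← hsplit, ← hsplit2, hdiag, add_zero, hswap, ← Finset.sum_add_distrib]
  apply Finset.sum_congr rfl
  intro p _
  simp only [hF, Prod.fst_swap, Prod.snd_swap]
  ring

/-- **Proposition 8, first bound.** For a mixture `μ = Σ_i α_i e^{-U_i}` of strongly log-concave
components with `∇² U_i ≽ K I_d`, the log-Hessian satisfies
`-∇² log μ ≽ K I_d - μ⁻² Σ_{i>j} α_i α_j e^{-U_i-U_j} (∇U_i - ∇U_j)^{⊗2}`
(as quadratic forms, evaluated at any direction `w`). -/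
theorem mixture_log_hessian_lower_bound
    (d N : ℕ) (hN : 1 ≤ N)
    (a : Fin N → ℝ) (ha : ∀ i, 0 < a i)
    (U : Fin N → EuclideanSpace ℝ (Fin d) → ℝ)
    (hU : ∀ i, ContDiff ℝ 2 (U i))
    (hInt : ∀ i, Integrable (fun x => Real.exp (-(U i x))))
    (K : ℝ) (hK : 0 < K)
    (hHess : ∀ i (x w : EuclideanSpace ℝ (Fin d)),
      K * ‖w‖ ^ 2 ≤ iteratedFDeriv ℝ 2 (U i) x ![w, w])
    (μ : EuclideanSpace ℝ (Fin d) → ℝ)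
    (hμ : ∀ x, μ x = ∑ i, a i * Real.exp (-(U i x)))
    (x w : EuclideanSpace ℝ (Fin d)) :
    K * ‖w‖ ^ 2 -
        ((μ x) ^ 2)⁻¹ *
          ∑ p ∈ Finset.univ.filter (fun p : Fin N × Fin N => p.2 < p.1),
            a p.1 * a p.2 * Real.exp (-(U p.1 x) - U p.2 x) *
              ⟪gradient (U p.1) x - gradient (U p.2) x, w⟫ ^ 2
      ≤ -(iteratedFDeriv ℝ 2 (fun y => Real.log (μ y)) x ![w, w]) := by
  classical
  have hNe : Nonempty (Fin N) := ⟨⟨0, hN⟩⟩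
  have hUdiff : ∀ i, Differentiable ℝ (U i) := fun i => (hU i).differentiable two_ne_zero
  have hUf : ∀ i, ContDiff ℝ 1 (fun y => fderiv ℝ (U i) y) :=
    fun i => (hU i).fderiv_right (by norm_num)
  have hμpos : ∀ y, 0 < μ y := by
    intro y
    rw [hμ]
    exact Finset.sum_pos (fun i _ => mul_pos (ha i) (Real.exp_pos _)) Finset.univ_nonempty
  -- derivative of each mixture component
  have hgd : ∀ i (y : EuclideanSpace ℝ (Fin d)),
      HasFDerivAt (fun z => a i * Real.exp (-(U i z)))
        ((-(a i * Real.exp (-(U i y)))) • fderiv ℝ (U i) y) y := by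
    intro i y
    have h1 : HasFDerivAt (fun z => -(U i z)) (-(fderiv ℝ (U i) y)) y :=
      ((hUdiff i y).hasFDerivAt).neg
    have h3 := h1.exp.const_mul (a i)
    rw [smul_smul, smul_neg, ← neg_smul] at h3
    exact h3
  set D : EuclideanSpace ℝ (Fin d) → (EuclideanSpace ℝ (Fin d) →L[ℝ] ℝ) :=
    fun y => ∑ i, (-(a i * Real.exp (-(U i y)))) • fderiv ℝ (U i) y with hD
  have hμfun : μ = fun y => ∑ i, a i * Real.exp (-(U i y)) := funext hμ
  have hμ' : ∀ y, HasFDerivAt μ (D y) y := by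
    intro y
    rw [hμfun]
    exact HasFDerivAt.fun_sum fun i _ => hgd i y
  have hf : ∀ y, HasFDerivAt (fun z => Real.log (μ z)) ((μ y)⁻¹ • D y) y :=
    fun y => (hμ' y).log (hμpos y).ne'
  have hfderiv : fderiv ℝ (fun z => Real.log (μ z)) = fun y => (μ y)⁻¹ • D y :=
    funext fun y => (hf y).fderiv
  have hDdiff : Differentiable ℝ D := by
    apply Differentiable.fun_sum
    intro i _
    exact (((hUdiff i).neg.exp.const_mul (a i)).neg).smul ((hUf i).differentiable one_ne_zero)
  have hμinv : HasFDerivAt (fun y => (μ y)⁻¹) ((-((μ x) ^ 2)⁻¹) • D x) x :=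
    (hasDerivAt_inv (hμpos x).ne').comp_hasFDerivAt x (hμ' x)
  have hsi : ∀ i, HasFDerivAt (fun y => fderiv ℝ (U i) y w)
      ((fderiv ℝ (U i) x).comp (0 : EuclideanSpace ℝ (Fin d) →L[ℝ] EuclideanSpace ℝ (Fin d))
        + (fderiv ℝ (fun y => fderiv ℝ (U i) y) x).flip w) x :=
    fun i => ((((hUf i).differentiable one_ne_zero) x).hasFDerivAt).clm_apply (hasFDerivAt_const w x)
  have hterm : ∀ i, HasFDerivAt
      (fun y => (-(a i * Real.exp (-(U i y)))) * (fderiv ℝ (U i) y w))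
      ((-(a i * Real.exp (-(U i x)))) •
          ((fderiv ℝ (U i) x).comp (0 : EuclideanSpace ℝ (Fin d) →L[ℝ] EuclideanSpace ℝ (Fin d))
            + (fderiv ℝ (fun y => fderiv ℝ (U i) y) x).flip w)
        + (fderiv ℝ (U i) x w) • (-((-(a i * Real.exp (-(U i x)))) • fderiv ℝ (U i) x))) x :=
    fun i => ((hgd i x).neg).mul (hsi i)
  have hq : HasFDerivAt
      (fun y => (μ y)⁻¹ * ∑ i, (-(a i * Real.exp (-(U i y)))) * (fderiv ℝ (U i) y w))
      ((μ x)⁻¹ • (∑ i, ((-(a i * Real.exp (-(U i x)))) •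
          ((fderiv ℝ (U i) x).comp (0 : EuclideanSpace ℝ (Fin d) →L[ℝ] EuclideanSpace ℝ (Fin d))
            + (fderiv ℝ (fun y => fderiv ℝ (U i) y) x).flip w)
        + (fderiv ℝ (U i) x w) • (-((-(a i * Real.exp (-(U i x)))) • fderiv ℝ (U i) x))))
        + (∑ i, (-(a i * Real.exp (-(U i x)))) * (fderiv ℝ (U i) x w)) •
            ((-((μ x) ^ 2)⁻¹) • D x)) x :=
    hμinv.mul (HasFDerivAt.fun_sum fun i _ => hterm i)
  have hq_eq : (fun y => fderiv ℝ (fun z => Real.log (μ z)) y w)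
      = fun y => (μ y)⁻¹ * ∑ i, (-(a i * Real.exp (-(U i y)))) * (fderiv ℝ (U i) y w) := by
    funext y
    rw [hfderiv]
    simp [hD]
  have h2nd : iteratedFDeriv ℝ 2 (fun y => Real.log (μ y)) x ![w, w]
      = fderiv ℝ (fun y => fderiv ℝ (fun z => Real.log (μ z)) y w) x w := by
    have hc : DifferentiableAt ℝ (fderiv ℝ (fun z => Real.log (μ z))) x := by
      rw [hfderiv]
      exact DifferentiableAt.smul (((hμ' x).differentiableAt).inv (hμpos x).ne') (hDdiff x)
    rw [iteratedFDeriv_two_apply, fderiv_clm_apply hc (differentiableAt_const w)]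
    simp
  -- abbreviations for values at x
  set g : Fin N → ℝ := fun i => a i * Real.exp (-(U i x)) with hg
  set s : Fin N → ℝ := fun i => fderiv ℝ (U i) x w with hs
  set Hi : Fin N → ℝ := fun i => iteratedFDeriv ℝ 2 (U i) x ![w, w] with hHi
  have hHieq : ∀ i, (fderiv ℝ (fun y => fderiv ℝ (U i) y) x) w w = Hi i := by
    intro i
    show _ = iteratedFDeriv ℝ 2 (U i) x ![w, w]
    rw [iteratedFDeriv_two_apply]
    simp
  have hmain : iteratedFDeriv ℝ 2 (fun y => Real.log (μ y)) x ![w, w]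
      = (μ x)⁻¹ * (∑ i, (g i * s i ^ 2 - g i * Hi i))
        - ((μ x) ^ 2)⁻¹ * (∑ i, g i * s i) ^ 2 := by
    rw [h2nd, hq_eq, hq.fderiv]
    simp only [ContinuousLinearMap.add_apply, ContinuousLinearMap.smul_apply,
      ContinuousLinearMap.sum_apply, ContinuousLinearMap.coe_comp', Function.comp_apply,
      ContinuousLinearMap.zero_apply, ContinuousLinearMap.flip_apply,
      ContinuousLinearMap.neg_apply, smul_eq_mul, map_zero, zero_add, hD]
    have h1 : (∑ i : Fin N, (-(a i * Real.exp (-(U i x))) *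
          ((fderiv ℝ (fun y => fderiv ℝ (U i) y) x) w) w +
          (fderiv ℝ (U i) x) w * -(-(a i * Real.exp (-(U i x))) * (fderiv ℝ (U i) x) w)))
        = ∑ i, (g i * s i ^ 2 - g i * Hi i) := by
      refine Finset.sum_congr rfl fun i _ => ?_
      rw [hHieq i]
      simp only [hg, hs]
      ring
    have h2 : (∑ i : Fin N, -(a i * Real.exp (-(U i x))) * (fderiv ℝ (U i) x) w)
        = -∑ i, g i * s i := by
      rw [← Finset.sum_neg_distrib]
      refine Finset.sum_congr rfl fun i _ => ?_
      simp only [hg, hs]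
      ring
    rw [h1, h2]
    ring
  -- rewrite the goal's pair sum
  have hip : ∀ i, ⟪gradient (U i) x, w⟫ = s i := by
    intro i
    have h : ⟪gradient (U i) x, w⟫ = (fderiv ℝ (U i) x) w :=
      InnerProductSpace.toDual_symm_apply
    rw [h, hs]
  have hFS : (∑ p ∈ Finset.univ.filter (fun p : Fin N × Fin N => p.2 < p.1),
        a p.1 * a p.2 * Real.exp (-(U p.1 x) - U p.2 x) *
          ⟪gradient (U p.1) x - gradient (U p.2) x, w⟫ ^ 2)
      = ∑ p ∈ Finset.univ.filter (fun p : Fin N × Fin N => p.2 < p.1),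
          g p.1 * g p.2 * (s p.1 - s p.2) ^ 2 := by
    refine Finset.sum_congr rfl fun p _ => ?_
    have h1 : ⟪gradient (U p.1) x - gradient (U p.2) x, w⟫ = s p.1 - s p.2 := by
      rw [inner_sub_left, hip, hip]
    rw [h1, sub_eq_add_neg (-(U p.1 x)) (U p.2 x), Real.exp_add]
    simp only [hg]
    ring
  have hμsum : μ x = ∑ i, g i := by
    rw [hμ]
  have hLag := lagrange_identity g s
  rw [← hμsum] at hLag
  have hKw : K * ‖w‖ ^ 2 ≤ (μ x)⁻¹ * ∑ i, g i * Hi i := by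
    have h1 : K * ‖w‖ ^ 2 * μ x ≤ ∑ i, g i * Hi i := by
      have e : K * ‖w‖ ^ 2 * μ x = ∑ i, g i * (K * ‖w‖ ^ 2) := by
        have : K * ‖w‖ ^ 2 * μ x = μ x * (K * ‖w‖ ^ 2) := by ring
        rw [this, hμsum, Finset.sum_mul]
      rw [e]
      refine Finset.sum_le_sum fun i _ => ?_
      have hgpos : 0 ≤ g i := (mul_pos (ha i) (Real.exp_pos _)).le
      exact mul_le_mul_of_nonneg_left (by rw [hHi]; exact hHess i x w) hgpos
    calc K * ‖w‖ ^ 2 = (μ x)⁻¹ * (K * ‖w‖ ^ 2 * μ x) := by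
          field_simp
          rw [mul_div_assoc, div_self (hμpos x).ne', mul_one]
      _ ≤ (μ x)⁻¹ * ∑ i, g i * Hi i := mul_le_mul_of_nonneg_left h1 (inv_nonneg.2 (hμpos x).le)
  rw [hFS, hmain, ← hLag, Finset.sum_sub_distrib]
  have hInvEq : ((μ x) ^ 2)⁻¹ * (μ x * (∑ i, g i * s i ^ 2)) = (μ x)⁻¹ * ∑ i, g i * s i ^ 2 := by
    rw [sq]
    field_simp
  have hExp : K * ‖w‖ ^ 2 -
      ((μ x) ^ 2)⁻¹ * (μ x * (∑ i, g i * s i ^ 2) - (∑ i, g i * s i) ^ 2)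
      = K * ‖w‖ ^ 2 - (μ x)⁻¹ * (∑ i, g i * s i ^ 2)
        + ((μ x) ^ 2)⁻¹ * (∑ i, g i * s i) ^ 2 := by
    rw [mul_sub, hInvEq]
    ring
  rw [hExp]
  have hRHS : -((μ x)⁻¹ * ((∑ i, g i * s i ^ 2) - ∑ i, g i * Hi i)
      - ((μ x) ^ 2)⁻¹ * (∑ i, g i * s i) ^ 2)
      = (μ x)⁻¹ * (∑ i, g i * Hi i) - (μ x)⁻¹ * (∑ i, g i * s i ^ 2)
        + ((μ x) ^ 2)⁻¹ * (∑ i, g i * s i) ^ 2 := by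
    rw [mul_sub]
    ring
  rw [hRHS]
  linarith [hKw]
end
end

section
/- Let μ = Σ_{i=1}^N α_i e^{−U_i} for some N ≥ 1, weights α_i > 0, and potentials U_i ∈ C²(ℝ^d) with e^{−U_i} ∈ L¹(ℝ^d), and assume ∇²U_i(x) ≽ K·I_d for all i and all x, for some K > 0. Then at every x ∈ ℝ^d, −∇² log μ(x) ≽ K·I_d − Σ_{i>j} (∇U_i(x) − ∇U_j(x))^{⊗2} / ( 2 + (α_i/α_j) e^{U_j(x)−U_i(x)} + (α_j/α_i) e^{U_i(x)−U_j(x)} ). -/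
noncomputable section
open Real MeasureTheory
open scoped RealInnerProductSpace

set_option maxHeartbeats 2000000

lemma var_identity' {N : ℕ} (p c : Fin N → ℝ) (hp : ∑ i, p i = 1) :
    ∑ i, p i * c i ^ 2 - (∑ i, p i * c i) ^ 2
      = ∑ q ∈ Finset.univ.filter (fun q : Fin N × Fin N => q.2 < q.1),
          p q.1 * p q.2 * (c q.1 - c q.2) ^ 2 := by
  set T := ∑ i, p i * c i with hT
  set Q := ∑ i, p i * c i ^ 2 with hQ
  have key : ∀ i, ∑ j, p i * p j * (c i - c j) ^ 2
      = p i * c i ^ 2 - 2 * (p i * c i * T) + p i * Q := by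
    intro i
    have h1 : ∀ j, p i * p j * (c i - c j) ^ 2
        = p i * c i ^ 2 * p j - 2 * (p i * c i) * (p j * c j) + p i * (p j * c j ^ 2) := by
      intro j; ring
    rw [Finset.sum_congr rfl (fun j _ => h1 j), Finset.sum_add_distrib,
      Finset.sum_sub_distrib, ← Finset.mul_sum, ← Finset.mul_sum, ← Finset.mul_sum, hp, hT, hQ]
    ring
  have hdouble : ∑ q : Fin N × Fin N, p q.1 * p q.2 * (c q.1 - c q.2) ^ 2
      = 2 * (Q - T ^ 2) := by
    rw [Fintype.sum_prod_type, Finset.sum_congr rfl (fun i _ => key i),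
      Finset.sum_add_distrib, Finset.sum_sub_distrib]
    have e0 : ∀ i : Fin N, 2 * (p i * c i * T) = 2 * T * (p i * c i) := fun i => by ring
    have e1 : ∑ i, 2 * (p i * c i * T) = 2 * T * T := by
      rw [Finset.sum_congr rfl fun i _ => e0 i, ← Finset.mul_sum, ← hT]
    have e2 : ∑ i, p i * Q = Q := by rw [← Finset.sum_mul, hp, one_mul]
    rw [e1, e2, ← hQ]
    ring
  -- split the full sum into lower, upper and diagonal parts
  have hsplit : ∑ q : Fin N × Fin N, p q.1 * p q.2 * (c q.1 - c q.2) ^ 2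
      = 2 * ∑ q ∈ Finset.univ.filter (fun q : Fin N × Fin N => q.2 < q.1),
          p q.1 * p q.2 * (c q.1 - c q.2) ^ 2 := by
    rw [← Finset.sum_filter_add_sum_filter_not Finset.univ
      (fun q : Fin N × Fin N => q.2 < q.1)]
    have hswap : ∑ q ∈ Finset.univ.filter (fun q : Fin N × Fin N => ¬ q.2 < q.1),
        p q.1 * p q.2 * (c q.1 - c q.2) ^ 2
        = ∑ q ∈ Finset.univ.filter (fun q : Fin N × Fin N => q.2 < q.1),
          p q.1 * p q.2 * (c q.1 - c q.2) ^ 2 := by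
      rw [← Finset.sum_filter_add_sum_filter_not
        (Finset.univ.filter (fun q : Fin N × Fin N => ¬ q.2 < q.1))
        (fun q : Fin N × Fin N => q.1 < q.2)]
      have hdiag : ∑ q ∈ (Finset.univ.filter
          (fun q : Fin N × Fin N => ¬ q.2 < q.1)).filter
            (fun q : Fin N × Fin N => ¬ q.1 < q.2),
          p q.1 * p q.2 * (c q.1 - c q.2) ^ 2 = 0 := by
        apply Finset.sum_eq_zero
        intro q hq
        simp only [Finset.mem_filter] at hq
        have : q.1 = q.2 := le_antisymm (not_lt.1 hq.1.2) (not_lt.1 hq.2)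
        rw [this]; ring
      rw [hdiag, add_zero]
      apply Finset.sum_nbij' (fun q => Prod.swap q) (fun q => Prod.swap q)
      · intro q hq
        simp only [Finset.mem_filter, Finset.mem_univ, true_and] at hq ⊢
        exact hq.2
      · intro q hq
        simp only [Finset.mem_filter, Finset.mem_univ, true_and] at hq ⊢
        exact ⟨not_lt.2 hq.le, hq⟩
      · intro q _; rfl
      · intro q _; rfl
      · intro q _; simp [Prod.swap]; ring
    rw [hswap]; ring
  have := hsplit ▸ hdouble
  linarith

/-- **Proposition 8, second bound.** For a mixture `μ = Σ_i α_i e^{-U_i}` of strongly log-concave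
components with `∇² U_i ≽ K I_d`, the log-Hessian satisfies
`-∇² log μ ≽ K I_d - Σ_{i>j} (∇U_i - ∇U_j)^{⊗2} / (2 + (α_i/α_j)e^{U_j-U_i} + (α_j/α_i)e^{U_i-U_j})`
(as quadratic forms, evaluated at any direction `w`). -/
theorem mixture_log_hessian_lower_bound_crude
    (d N : ℕ) (hN : 1 ≤ N)
    (a : Fin N → ℝ) (ha : ∀ i, 0 < a i)
    (U : Fin N → EuclideanSpace ℝ (Fin d) → ℝ)
    (hU : ∀ i, ContDiff ℝ 2 (U i))
    (hInt : ∀ i, Integrable (fun x => Real.exp (-(U i x))))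
    (K : ℝ) (hK : 0 < K)
    (hHess : ∀ i (x w : EuclideanSpace ℝ (Fin d)),
      K * ‖w‖ ^ 2 ≤ iteratedFDeriv ℝ 2 (U i) x ![w, w])
    (μ : EuclideanSpace ℝ (Fin d) → ℝ)
    (hμ : ∀ x, μ x = ∑ i, a i * Real.exp (-(U i x)))
    (x w : EuclideanSpace ℝ (Fin d)) :
    K * ‖w‖ ^ 2 -
        ∑ p ∈ Finset.univ.filter (fun p : Fin N × Fin N => p.2 < p.1),
          ⟪gradient (U p.1) x - gradient (U p.2) x, w⟫ ^ 2 /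
            (2 + a p.1 / a p.2 * Real.exp (U p.2 x - U p.1 x)
               + a p.2 / a p.1 * Real.exp (U p.1 x - U p.2 x))
      ≤ -(iteratedFDeriv ℝ 2 (fun y => Real.log (μ y)) x ![w, w]) := by
  haveI : NeZero N := ⟨by omega⟩
  set F : Fin N → EuclideanSpace ℝ (Fin d) → ℝ :=
    fun i y => a i * Real.exp (-(U i y)) with hFdef
  have hFpos : ∀ i y, 0 < F i y := fun i y => mul_pos (ha i) (Real.exp_pos _)
  have hμeq : μ = fun y => ∑ i, F i y := funext fun y => hμ y
  have hμpos : ∀ y, 0 < μ y := fun y => by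
    rw [hμeq]; exact Finset.sum_pos (fun i _ => hFpos i y) Finset.univ_nonempty
  have hUdiff : ∀ i, Differentiable ℝ (U i) := fun i => (hU i).differentiable two_ne_zero
  have hUf : ∀ i, Differentiable ℝ (fderiv ℝ (U i)) := fun i =>
    ((hU i).fderiv_right (by norm_num)).differentiable one_ne_zero
  -- first derivative of the components
  have hFd : ∀ i y, HasFDerivAt (F i) ((-(F i y)) • fderiv ℝ (U i) y) y := by
    intro i y
    have h0 : HasFDerivAt (fun y => a i * Real.exp (-(U i y))) (a i • Real.exp (-(U i y)) • -fderiv ℝ (U i) y) y := (((hUdiff i y).hasFDerivAt).neg).exp.const_mul (a i)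
    convert h0 using 1
    ext v
    simp [hFdef]
    ring
  have hDμ : ∀ y, HasFDerivAt μ (∑ i, (-(F i y)) • fderiv ℝ (U i) y) y := by
    intro y; rw [hμeq]; exact HasFDerivAt.fun_sum fun i _ => hFd i y
  have hlog : ∀ y, HasFDerivAt (fun z => Real.log (μ z))
      ((μ y)⁻¹ • ∑ i, (-(F i y)) • fderiv ℝ (U i) y) y :=
    fun y => (hDμ y).log (hμpos y).ne'
  set S : EuclideanSpace ℝ (Fin d) → ℝ :=
    fun y => ∑ i, F i y * fderiv ℝ (U i) y w with hSdef
  have hlogw : ∀ y, fderiv ℝ (fun z => Real.log (μ z)) y w = -((μ y)⁻¹ * S y) := by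
    intro y
    rw [(hlog y).fderiv]
    simp [hSdef, Finset.mul_sum, mul_comm, mul_left_comm]
  -- smoothness of log μ
  have hμC : ContDiff ℝ 2 μ := by
    rw [hμeq]
    exact ContDiff.sum fun i _ => contDiff_const.mul ((hU i).neg.exp)
  have hlogC : ContDiff ℝ 2 (fun y => Real.log (μ y)) :=
    hμC.log fun y => (hμpos y).ne'
  have hfd1 : Differentiable ℝ (fderiv ℝ (fun y => Real.log (μ y))) :=
    (hlogC.fderiv_right (by norm_num)).differentiable one_ne_zero
  have hB : iteratedFDeriv ℝ 2 (fun y => Real.log (μ y)) x ![w, w]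
      = fderiv ℝ (fun y => fderiv ℝ (fun z => Real.log (μ z)) y w) x w := by
    rw [iteratedFDeriv_two_apply, fderiv_clm_apply (hfd1 x) (differentiableAt_const w)]
    simp
  -- second derivatives of components
  have hUfd : ∀ i, HasFDerivAt (fun y => fderiv ℝ (U i) y w)
      ((fderiv ℝ (U i) x).comp (0 : EuclideanSpace ℝ (Fin d) →L[ℝ] EuclideanSpace ℝ (Fin d))
        + (fderiv ℝ (fderiv ℝ (U i)) x).flip w) x :=
    fun i => ((hUf i x).hasFDerivAt).clm_apply (hasFDerivAt_const w x)
  have hSd : HasFDerivAt S (∑ i, (F i x •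
        ((fderiv ℝ (U i) x).comp (0 : EuclideanSpace ℝ (Fin d) →L[ℝ] EuclideanSpace ℝ (Fin d))
          + (fderiv ℝ (fderiv ℝ (U i)) x).flip w)
        + (fderiv ℝ (U i) x w) • ((-(F i x)) • fderiv ℝ (U i) x))) x := by
    apply HasFDerivAt.fun_sum
    intro i _
    exact (hFd i x).mul (hUfd i)
  have hinv : HasFDerivAt (fun y => (μ y)⁻¹)
      ((-((μ x) ^ 2)⁻¹) • ∑ i, (-(F i x)) • fderiv ℝ (U i) x) x := by
    have := (hasDerivAt_inv (hμpos x).ne').comp_hasFDerivAt x (hDμ x)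
    exact this
  have hmain := (hinv.fun_mul hSd).fun_neg
  have hfun : (fun y => fderiv ℝ (fun z => Real.log (μ z)) y w)
      = fun y => -((μ y)⁻¹ * S y) := funext hlogw
  -- the value of the second derivative of log μ
  set c : Fin N → ℝ := fun i => fderiv ℝ (U i) x w with hcdef
  set b : Fin N → ℝ := fun i => fderiv ℝ (fderiv ℝ (U i)) x w w with hbdef
  set p : Fin N → ℝ := fun i => F i x / μ x with hpdef
  have hbval : ∀ i, b i = iteratedFDeriv ℝ 2 (U i) x ![w, w] := by
    intro i; rw [iteratedFDeriv_two_apply]; simp [hbdef]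
  have hval : -(iteratedFDeriv ℝ 2 (fun y => Real.log (μ y)) x ![w, w])
      = ∑ i, p i * b i - (∑ i, p i * c i ^ 2 - (∑ i, p i * c i) ^ 2) := by
    rw [hB, hfun, hmain.fderiv]
    simp only [ContinuousLinearMap.neg_apply, ContinuousLinearMap.add_apply,
      ContinuousLinearMap.smul_apply, ContinuousLinearMap.sum_apply,
      ContinuousLinearMap.comp_apply, ContinuousLinearMap.zero_apply,
      ContinuousLinearMap.flip_apply, map_zero, smul_eq_mul, zero_add]
    have hm : (μ x : ℝ) ≠ 0 := (hμpos x).ne'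
    have hS : S x = ∑ i, F i x * c i := rfl
    simp only [hpdef, hcdef, hbdef]
    rw [Finset.sum_add_distrib]
    simp_rw [div_mul_eq_mul_div, ← Finset.sum_div]
    have e1 : ∑ i, -F i x * fderiv ℝ (U i) x w = -(S x) := by
      simp [hSdef, Finset.sum_neg_distrib]
    rw [e1]
    have e2 : ∑ i, fderiv ℝ (U i) x w * (-F i x * fderiv ℝ (U i) x w)
        = -∑ i, F i x * (fderiv ℝ (U i) x w) ^ 2 := by
      rw [← Finset.sum_neg_distrib]
      exact Finset.sum_congr rfl fun i _ => by ring
    rw [e2, hS]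
    field_simp
    ring
  rw [hval]
  have hm : (0:ℝ) < μ x := hμpos x
  have hμsum : ∑ i, F i x = μ x := (congrFun hμeq x).symm
  have hsum1 : ∑ i, p i = 1 := by
    simp only [hpdef]
    rw [← Finset.sum_div, hμsum, div_self hm.ne']
  have hppos : ∀ i, 0 < p i := fun i => div_pos (hFpos i x) hm
  have hK2 : K * ‖w‖ ^ 2 ≤ ∑ i, p i * b i := by
    calc K * ‖w‖ ^ 2 = ∑ i, p i * (K * ‖w‖ ^ 2) := by
          rw [← Finset.sum_mul, hsum1, one_mul]
      _ ≤ ∑ i, p i * b i := Finset.sum_le_sum fun i _ =>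
          mul_le_mul_of_nonneg_left (by rw [hbval i]; exact hHess i x w) (hppos i).le
  rw [var_identity' p c hsum1]
  apply sub_le_sub hK2
  apply Finset.sum_le_sum
  intro q hq
  simp only [Finset.mem_filter, Finset.mem_univ, true_and] at hq
  have hne : q.1 ≠ q.2 := ne_of_gt hq
  have hg : ∀ k, ⟪gradient (U k) x, w⟫ = c k := fun k =>
    InnerProductSpace.toDual_symm_apply
  have hgd : ⟪gradient (U q.1) x - gradient (U q.2) x, w⟫ = c q.1 - c q.2 := by
    rw [inner_sub_left, hg, hg]
  rw [hgd]
  set D : ℝ := 2 + a q.1 / a q.2 * Real.exp (U q.2 x - U q.1 x)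
      + a q.2 / a q.1 * Real.exp (U q.1 x - U q.2 x) with hDdef
  have hDpos : 0 < D := by
    have h1 : 0 < a q.1 / a q.2 * Real.exp (U q.2 x - U q.1 x) :=
      mul_pos (div_pos (ha q.1) (ha q.2)) (Real.exp_pos _)
    have h2 : 0 < a q.2 / a q.1 * Real.exp (U q.1 x - U q.2 x) :=
      mul_pos (div_pos (ha q.2) (ha q.1)) (Real.exp_pos _)
    rw [hDdef]; linarith
  have hr : ∀ k l : Fin N, a k / a l * Real.exp (U l x - U k x) = F k x / F l x := by
    intro k l
    simp only [hFdef]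
    rw [Real.exp_sub, Real.exp_neg, Real.exp_neg]
    have e1 := Real.exp_ne_zero (U k x)
    have e2 := Real.exp_ne_zero (U l x)
    field_simp
  have hle : F q.1 x + F q.2 x ≤ μ x := by
    have hsub : ∑ k ∈ ({q.1, q.2} : Finset (Fin N)), F k x ≤ ∑ k, F k x :=
      Finset.sum_le_sum_of_subset_of_nonneg (Finset.subset_univ _)
        (fun k _ _ => (hFpos k x).le)
    rw [Finset.sum_pair hne] at hsub
    rw [← hμsum]; exact hsub
  have hkey : p q.1 * p q.2 * D = ((F q.1 x + F q.2 x) / μ x) ^ 2 := by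
    rw [hDdef, hr, hr]
    simp only [hpdef, hFdef]
    field_simp [(ha q.1).ne', (ha q.2).ne', Real.exp_ne_zero]
    ring
  have hfrac : (F q.1 x + F q.2 x) / μ x ≤ 1 := (div_le_one hm).2 hle
  have hfracpos : 0 ≤ (F q.1 x + F q.2 x) / μ x :=
    div_nonneg (add_nonneg (hFpos q.1 x).le (hFpos q.2 x).le) hm.le
  have hD1 : p q.1 * p q.2 * D ≤ 1 := by
    rw [hkey]
    calc ((F q.1 x + F q.2 x) / μ x) ^ 2 ≤ 1 ^ 2 := by
          apply pow_le_pow_left₀ hfracpos hfrac 2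
      _ = 1 := one_pow 2
  have hpp : p q.1 * p q.2 ≤ 1 / D := (le_div_iff₀ hDpos).2 hD1
  calc p q.1 * p q.2 * (c q.1 - c q.2) ^ 2
      ≤ (1 / D) * (c q.1 - c q.2) ^ 2 :=
        mul_le_mul_of_nonneg_right hpp (sq_nonneg _)
    _ = (c q.1 - c q.2) ^ 2 / D := by ring
end
end

section
/- Let μ be a probability measure on ℝ^d, t > 0, and z ∈ ℝ^d. Define the probability measure μ_{z,t}(dx) ∝ exp( ⟨z,x⟩/t − ‖x‖²/(2t) ) μ(dx). Then −∇² log(μ*γ_t)(z) = (1/t)·( I_d − Cov(μ_{z,t})/t ), where Cov(μ_{z,t}) is the covariance matrix of μ_{z,t}. -/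
noncomputable section
open Real MeasureTheory
open scoped RealInnerProductSpace

/-- The Gaussian tilt `exp(⟨z,x⟩/t - ‖x‖²/(2t))` defining the tilted measure `μ_{z,t}`. -/
def tilt {d : ℕ} (z : EuclideanSpace ℝ (Fin d)) (t : ℝ)
    (x : EuclideanSpace ℝ (Fin d)) : ℝ :=
  Real.exp (⟪z, x⟫ / t - ‖x‖ ^ 2 / (2 * t))

namespace LogHessAux

variable {d : ℕ}

lemma tilt_pos (y : EuclideanSpace ℝ (Fin d)) (t : ℝ) (x : EuclideanSpace ℝ (Fin d)) :
    0 < tilt y t x := Real.exp_pos _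

lemma tilt_continuous (y : EuclideanSpace ℝ (Fin d)) (t : ℝ) :
    Continuous fun x : EuclideanSpace ℝ (Fin d) => tilt y t x := by
  unfold tilt
  exact Real.continuous_exp.comp
    (((continuous_const.inner continuous_id).div_const t).sub
      ((continuous_norm.pow 2).div_const (2 * t)))

lemma tilt_exponent_le {t R : ℝ} (ht : 0 < t) {y : EuclideanSpace ℝ (Fin d)} (hy : ‖y‖ ≤ R)
    (x : EuclideanSpace ℝ (Fin d)) :
    ⟪y, x⟫ / t - ‖x‖ ^ 2 / (2 * t) ≤ R ^ 2 / t - ‖x‖ ^ 2 / (4 * t) := by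
  have h2 : ⟪y, x⟫ - ‖x‖ ^ 2 / 2 ≤ R ^ 2 - ‖x‖ ^ 2 / 4 := by
    nlinarith [real_inner_le_norm y x, norm_nonneg x, norm_nonneg y,
      sq_nonneg (R - ‖x‖ / 2), mul_le_mul_of_nonneg_right hy (norm_nonneg x)]
  rw [show ⟪y, x⟫ / t - ‖x‖ ^ 2 / (2 * t) = (⟪y, x⟫ - ‖x‖ ^ 2 / 2) / t by ring,
    show R ^ 2 / t - ‖x‖ ^ 2 / (4 * t) = (R ^ 2 - ‖x‖ ^ 2 / 4) / t by ring]
  exact (div_le_div_iff_of_pos_right ht).mpr h2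

lemma tilt_le {t R : ℝ} (ht : 0 < t) {y : EuclideanSpace ℝ (Fin d)} (hy : ‖y‖ ≤ R)
    (x : EuclideanSpace ℝ (Fin d)) :
    tilt y t x ≤ Real.exp (R ^ 2 / t) * Real.exp (-‖x‖ ^ 2 / (4 * t)) := by
  unfold tilt
  rw [← Real.exp_add]
  apply Real.exp_le_exp.mpr
  have := tilt_exponent_le ht hy x
  have hne : -‖x‖ ^ 2 / (4 * t) = -(‖x‖ ^ 2 / (4 * t)) := by ring
  linarith [this]

lemma sq_mul_exp_le {t : ℝ} (ht : 0 < t) (x : EuclideanSpace ℝ (Fin d)) :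
    ‖x‖ ^ 2 * Real.exp (-‖x‖ ^ 2 / (4 * t)) ≤ 4 * t := by
  set u := ‖x‖ ^ 2 / (4 * t) with hu
  have hu0 : 0 ≤ u := by positivity
  have h1 : u ≤ Real.exp u := by linarith [Real.add_one_le_exp u]
  have h2 : ‖x‖ ^ 2 = 4 * t * u := by rw [hu]; field_simp
  have h3 : -‖x‖ ^ 2 / (4 * t) = -u := by rw [hu]; ring
  rw [h3, h2, Real.exp_neg]
  have he : (0:ℝ) < Real.exp u := Real.exp_pos u
  have key : u * (Real.exp u)⁻¹ ≤ 1 := by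
    rw [← div_eq_mul_inv, div_le_one he]; exact h1
  nlinarith [key, ht]

lemma tilt_bound0 {t R : ℝ} (ht : 0 < t) {y : EuclideanSpace ℝ (Fin d)} (hy : ‖y‖ ≤ R)
    (x : EuclideanSpace ℝ (Fin d)) : tilt y t x ≤ Real.exp (R ^ 2 / t) := by
  have h1 := tilt_le ht hy x
  have h2 : Real.exp (-‖x‖ ^ 2 / (4 * t)) ≤ 1 := by
    apply Real.exp_le_one_iff.mpr
    have : 0 ≤ ‖x‖ ^ 2 / (4 * t) := by positivity
    rw [neg_div]
    linarith [this]
  nlinarith [Real.exp_pos (R ^ 2 / t)]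

lemma tilt_bound2 {t R : ℝ} (ht : 0 < t) {y : EuclideanSpace ℝ (Fin d)} (hy : ‖y‖ ≤ R)
    (x : EuclideanSpace ℝ (Fin d)) :
    ‖x‖ ^ 2 * tilt y t x ≤ Real.exp (R ^ 2 / t) * (4 * t) := by
  calc ‖x‖ ^ 2 * tilt y t x
      ≤ ‖x‖ ^ 2 * (Real.exp (R ^ 2 / t) * Real.exp (-‖x‖ ^ 2 / (4 * t))) :=
        mul_le_mul_of_nonneg_left (tilt_le ht hy x) (by positivity)
    _ = Real.exp (R ^ 2 / t) * (‖x‖ ^ 2 * Real.exp (-‖x‖ ^ 2 / (4 * t))) := by ring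
    _ ≤ Real.exp (R ^ 2 / t) * (4 * t) :=
        mul_le_mul_of_nonneg_left (sq_mul_exp_le ht x) (Real.exp_pos _).le

lemma tilt_bound1 {t R : ℝ} (ht : 0 < t) {y : EuclideanSpace ℝ (Fin d)} (hy : ‖y‖ ≤ R)
    (x : EuclideanSpace ℝ (Fin d)) :
    ‖x‖ * tilt y t x ≤ Real.exp (R ^ 2 / t) * (1 + 4 * t) := by
  have h0 := tilt_bound0 ht hy x
  have h2 := tilt_bound2 ht hy x
  have hx : ‖x‖ ≤ 1 + ‖x‖ ^ 2 := by nlinarith [sq_nonneg (‖x‖ - 1)]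
  have hp := tilt_pos y t x
  nlinarith [mul_le_mul_of_nonneg_right hx hp.le]

end LogHessAux
set_option synthInstance.maxHeartbeats 1000000
set_option maxHeartbeats 1600000

namespace LogHessAux

variable {d : ℕ} {μ : Measure (EuclideanSpace ℝ (Fin d))} [IsProbabilityMeasure μ] {t : ℝ}

/-- `F0 μ t y = ∫ tilt y t x dμ`. -/
def F0 (μ : Measure (EuclideanSpace ℝ (Fin d))) (t : ℝ) (y : EuclideanSpace ℝ (Fin d)) : ℝ :=
  ∫ x, tilt y t x ∂μ

def D1 (μ : Measure (EuclideanSpace ℝ (Fin d))) (t : ℝ) (y : EuclideanSpace ℝ (Fin d)) :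
    EuclideanSpace ℝ (Fin d) →L[ℝ] ℝ :=
  ∫ x, (t⁻¹ * tilt y t x) • innerSL ℝ x ∂μ

def D2 (μ : Measure (EuclideanSpace ℝ (Fin d))) (t : ℝ) (y : EuclideanSpace ℝ (Fin d)) :
    EuclideanSpace ℝ (Fin d) →L[ℝ] EuclideanSpace ℝ (Fin d) →L[ℝ] ℝ :=
  ∫ x, (t⁻¹ * (t⁻¹ * tilt y t x)) • ((innerSL ℝ x).smulRight (innerSL ℝ x)) ∂μ

lemma integrable_tilt (ht : 0 < t) (y : EuclideanSpace ℝ (Fin d)) :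
    Integrable (fun x => tilt y t x) μ := by
  refine (integrable_const (Real.exp (‖y‖ ^ 2 / t))).mono'
    (tilt_continuous y t).aestronglyMeasurable (Filter.Eventually.of_forall fun x => ?_)
  rw [Real.norm_eq_abs, abs_of_pos (tilt_pos _ _ _)]
  exact tilt_bound0 ht le_rfl x

lemma F0_pos (ht : 0 < t) (y : EuclideanSpace ℝ (Fin d)) : 0 < F0 μ t y := by
  rw [F0]
  refine (integral_pos_iff_support_of_nonneg (fun x => (tilt_pos y t x).le)
    (integrable_tilt ht y)).mpr ?_
  have hsupp : (Function.support fun x => tilt y t x) = Set.univ :=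
    Set.eq_univ_iff_forall.mpr fun x => (tilt_pos y t x).ne'
  rw [hsupp]
  simp [measure_univ]

lemma continuous_D1i (y : EuclideanSpace ℝ (Fin d)) :
    Continuous fun x : EuclideanSpace ℝ (Fin d) => (t⁻¹ * tilt y t x) • innerSL ℝ x :=
  (continuous_const.mul (tilt_continuous y t)).smul (innerSL ℝ).continuous

lemma continuous_D2i (y : EuclideanSpace ℝ (Fin d)) :
    Continuous fun x : EuclideanSpace ℝ (Fin d) =>
      (t⁻¹ * (t⁻¹ * tilt y t x)) • ((innerSL ℝ x).smulRight (innerSL ℝ x)) := by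
  have h : Continuous fun x : EuclideanSpace ℝ (Fin d) =>
      (innerSL ℝ x).smulRight (innerSL ℝ x) := by
    have : (fun x : EuclideanSpace ℝ (Fin d) => (innerSL ℝ x).smulRight (innerSL ℝ x)) =
        fun x => ContinuousLinearMap.smulRightL ℝ (EuclideanSpace ℝ (Fin d))
          (EuclideanSpace ℝ (Fin d) →L[ℝ] ℝ) (innerSL ℝ x) (innerSL ℝ x) := rfl
    rw [this]
    exact ((ContinuousLinearMap.smulRightL ℝ _ _).continuous.comp
      (innerSL ℝ).continuous).clm_apply (innerSL ℝ).continuous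
  exact (continuous_const.mul (continuous_const.mul (tilt_continuous y t))).smul h

lemma D1i_norm_le (ht : 0 < t) {R : ℝ} {y : EuclideanSpace ℝ (Fin d)} (hy : ‖y‖ ≤ R)
    (x : EuclideanSpace ℝ (Fin d)) :
    ‖(t⁻¹ * tilt y t x) • innerSL ℝ x‖ ≤ t⁻¹ * (Real.exp (R ^ 2 / t) * (1 + 4 * t)) := by
  rw [norm_smul (t⁻¹ * tilt y t x) (innerSL ℝ x), Real.norm_eq_abs,
    abs_of_pos (mul_pos (inv_pos.mpr ht) (tilt_pos y t x)), innerSL_apply_norm]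
  have h1 := tilt_bound1 ht hy x
  have ht' : (0:ℝ) < t⁻¹ := by positivity
  calc t⁻¹ * tilt y t x * ‖x‖ = t⁻¹ * (‖x‖ * tilt y t x) := by ring
    _ ≤ t⁻¹ * (Real.exp (R ^ 2 / t) * (1 + 4 * t)) :=
      mul_le_mul_of_nonneg_left h1 ht'.le

lemma D2i_norm_le (ht : 0 < t) {R : ℝ} {y : EuclideanSpace ℝ (Fin d)} (hy : ‖y‖ ≤ R)
    (x : EuclideanSpace ℝ (Fin d)) :
    ‖(t⁻¹ * (t⁻¹ * tilt y t x)) • ((innerSL ℝ x).smulRight (innerSL ℝ x))‖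
      ≤ t⁻¹ * (t⁻¹ * (Real.exp (R ^ 2 / t) * (4 * t))) := by
  refine le_trans (ContinuousLinearMap.opNorm_smul_le _ _) ?_
  rw [Real.norm_eq_abs,
    abs_of_pos (mul_pos (inv_pos.mpr ht) (mul_pos (inv_pos.mpr ht) (tilt_pos y t x))),
    ContinuousLinearMap.norm_smulRight_apply, innerSL_apply_norm]
  have h2 := tilt_bound2 ht hy x
  calc t⁻¹ * (t⁻¹ * tilt y t x) * (‖x‖ * ‖x‖)
      = t⁻¹ * t⁻¹ * (‖x‖ ^ 2 * tilt y t x) := by ring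
    _ ≤ t⁻¹ * t⁻¹ * (Real.exp (R ^ 2 / t) * (4 * t)) :=
      mul_le_mul_of_nonneg_left h2 (by positivity)
    _ = t⁻¹ * (t⁻¹ * (Real.exp (R ^ 2 / t) * (4 * t))) := by ring

lemma integrable_D1i (ht : 0 < t) (y : EuclideanSpace ℝ (Fin d)) :
    Integrable (fun x => (t⁻¹ * tilt y t x) • innerSL ℝ x) μ :=
  (integrable_const (t⁻¹ * (Real.exp (‖y‖ ^ 2 / t) * (1 + 4 * t)))).mono'
    (continuous_D1i y).aestronglyMeasurable
    (Filter.Eventually.of_forall fun x => D1i_norm_le ht le_rfl x)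

instance instCENormD2 : ContinuousENorm
    (EuclideanSpace ℝ (Fin d) →L[ℝ] EuclideanSpace ℝ (Fin d) →L[ℝ] ℝ) := by
  letI : NormedAddCommGroup
    (EuclideanSpace ℝ (Fin d) →L[ℝ] EuclideanSpace ℝ (Fin d) →L[ℝ] ℝ) := inferInstance
  infer_instance

lemma integrable_D2i (ht : 0 < t) (y : EuclideanSpace ℝ (Fin d)) :
    Integrable (fun x => (t⁻¹ * (t⁻¹ * tilt y t x)) • ((innerSL ℝ x).smulRight (innerSL ℝ x))) μ :=
  by
  have h := (integrable_const (μ := μ) (t⁻¹ * (t⁻¹ * (Real.exp (‖y‖ ^ 2 / t) * (4 * t))))).mono'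
    (β := EuclideanSpace ℝ (Fin d) →L[ℝ] EuclideanSpace ℝ (Fin d) →L[ℝ] ℝ)
    (continuous_D2i y).aestronglyMeasurable
    (Filter.Eventually.of_forall fun x => D2i_norm_le ht le_rfl x)
  exact h

lemma hasFDerivAt_tilt (ht : t ≠ 0) (x y : EuclideanSpace ℝ (Fin d)) :
    HasFDerivAt (fun y => tilt y t x) ((t⁻¹ * tilt y t x) • innerSL ℝ x) y := by
  have h0 : (fun y : EuclideanSpace ℝ (Fin d) => tilt y t x) =
      fun y => Real.exp (t⁻¹ * (innerSL ℝ x) y - ‖x‖ ^ 2 / (2 * t)) := by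
    funext y
    rw [tilt, innerSL_apply_apply, real_inner_comm]
    ring_nf
  rw [h0]
  have h1 : HasFDerivAt (fun y : EuclideanSpace ℝ (Fin d) =>
      t⁻¹ * (innerSL ℝ x) y - ‖x‖ ^ 2 / (2 * t)) (t⁻¹ • innerSL ℝ x) y :=
    (((innerSL ℝ x).hasFDerivAt (x := y)).const_mul t⁻¹).sub_const (‖x‖ ^ 2 / (2 * t))
  have h3 := h1.exp
  refine h3.congr_fderiv ?_
  ext v
  simp only [ContinuousLinearMap.smul_apply, innerSL_apply_apply, smul_eq_mul, tilt]
  rw [real_inner_comm x y]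
  ring

lemma mem_ball_norm_le {z y : EuclideanSpace ℝ (Fin d)} (hy : y ∈ Metric.ball z 1) :
    ‖y‖ ≤ ‖z‖ + 1 := by
  have h := mem_ball_iff_norm.mp hy
  have h2 := norm_add_le (y - z) z
  rw [sub_add_cancel] at h2
  linarith

lemma hasFDerivAt_F0 (ht : 0 < t) (z : EuclideanSpace ℝ (Fin d)) :
    HasFDerivAt (F0 μ t) (D1 μ t z) z := by
  unfold F0 D1
  refine hasFDerivAt_integral_of_dominated_of_fderiv_le
    (F' := fun y x => (t⁻¹ * tilt y t x) • innerSL ℝ x)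
    (bound := fun _ => t⁻¹ * (Real.exp ((‖z‖ + 1) ^ 2 / t) * (1 + 4 * t)))
    (Metric.ball_mem_nhds z one_pos) ?_ ?_ ?_ ?_ ?_ ?_
  · exact Filter.Eventually.of_forall fun y => (tilt_continuous y t).aestronglyMeasurable
  · exact integrable_tilt ht z
  · exact (continuous_D1i z).aestronglyMeasurable
  · exact ae_of_all _ fun x y hy => D1i_norm_le ht (mem_ball_norm_le hy) x
  · exact integrable_const _
  · exact ae_of_all _ fun x y _ => hasFDerivAt_tilt ht.ne' x y

lemma hasFDerivAt_D1i (ht : t ≠ 0) (x y : EuclideanSpace ℝ (Fin d)) :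
    HasFDerivAt (fun y => (t⁻¹ * tilt y t x) • innerSL ℝ x)
      ((t⁻¹ * (t⁻¹ * tilt y t x)) • ((innerSL ℝ x).smulRight (innerSL ℝ x))) y := by
  have h := ((hasFDerivAt_tilt ht x y).const_mul t⁻¹).smul_const (innerSL ℝ x)
  refine h.congr_fderiv ?_
  ext v u
  simp only [ContinuousLinearMap.smul_apply, ContinuousLinearMap.smulRight_apply,
    innerSL_apply_apply, smul_eq_mul]
  ring

lemma hasFDerivAt_D1 (ht : 0 < t) (z : EuclideanSpace ℝ (Fin d)) :
    HasFDerivAt (D1 μ t) (D2 μ t z) z := by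
  unfold D1 D2
  refine hasFDerivAt_integral_of_dominated_of_fderiv_le
    (F' := fun y x => (t⁻¹ * (t⁻¹ * tilt y t x)) • ((innerSL ℝ x).smulRight (innerSL ℝ x)))
    (bound := fun _ => t⁻¹ * (t⁻¹ * (Real.exp ((‖z‖ + 1) ^ 2 / t) * (4 * t))))
    (Metric.ball_mem_nhds z one_pos) ?_ ?_ ?_ ?_ ?_ ?_
  · exact Filter.Eventually.of_forall fun y => (continuous_D1i y).aestronglyMeasurable
  · exact integrable_D1i ht z
  · exact (continuous_D2i z).aestronglyMeasurable
  · exact ae_of_all _ fun x y hy => D2i_norm_le ht (mem_ball_norm_le hy) x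
  · exact integrable_const _
  · exact ae_of_all _ fun x y _ => hasFDerivAt_D1i ht.ne' x y

end LogHessAux
namespace LogHessAux

variable {d : ℕ} {μ : Measure (EuclideanSpace ℝ (Fin d))} [IsProbabilityMeasure μ] {t : ℝ}

/-- The real inner product as a continuous bilinear map. -/
def innerB : EuclideanSpace ℝ (Fin d) →L[ℝ] EuclideanSpace ℝ (Fin d) →L[ℝ] ℝ := innerSL ℝ

lemma innerB_apply (y v : EuclideanSpace ℝ (Fin d)) : innerB y v = ⟪y, v⟫ := rfl

lemma innerB_eq (y : EuclideanSpace ℝ (Fin d)) : innerB y = innerSL ℝ y := rfl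

lemma D1_apply (ht : 0 < t) (z w : EuclideanSpace ℝ (Fin d)) :
    D1 μ t z w = t⁻¹ * ∫ x, tilt z t x * ⟪w, x⟫ ∂μ := by
  rw [D1, ContinuousLinearMap.integral_apply (integrable_D1i ht z)]
  have h : ∀ x : EuclideanSpace ℝ (Fin d),
      ((t⁻¹ * tilt z t x) • innerSL ℝ x) w = t⁻¹ * (tilt z t x * ⟪w, x⟫) := by
    intro x
    simp only [ContinuousLinearMap.smul_apply, innerSL_apply_apply, smul_eq_mul]
    rw [real_inner_comm]
    ring
  simp_rw [h]
  exact integral_const_mul _ _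

lemma D2_apply (ht : 0 < t) (z w : EuclideanSpace ℝ (Fin d)) :
    D2 μ t z w w = t⁻¹ * (t⁻¹ * ∫ x, tilt z t x * ⟪w, x⟫ ^ 2 ∂μ) := by
  rw [D2, ContinuousLinearMap.integral_apply (integrable_D2i ht z),
    ContinuousLinearMap.integral_apply ((integrable_D2i ht z).apply_continuousLinearMap w)]
  have h : ∀ x : EuclideanSpace ℝ (Fin d),
      (((t⁻¹ * (t⁻¹ * tilt z t x)) • ((innerSL ℝ x).smulRight (innerSL ℝ x))) w) w
        = t⁻¹ * (t⁻¹ * (tilt z t x * ⟪w, x⟫ ^ 2)) := by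
    intro x
    simp only [ContinuousLinearMap.smul_apply, ContinuousLinearMap.smulRight_apply,
      innerSL_apply_apply, smul_eq_mul]
    rw [real_inner_comm]
    ring
  simp_rw [h]
  rw [integral_const_mul]
  congr 1
  exact integral_const_mul _ _

lemma log_heatConv_eq (ht : 0 < t) :
    (fun y => Real.log (heatConvMeas μ t y)) =
      fun y => (Real.log ((2 * π * t) ^ (-(d : ℝ) / 2)) + -(2 * t)⁻¹ * ‖y‖ ^ 2)
        + Real.log (F0 μ t y) := by
  have hK : (0:ℝ) < (2 * π * t) ^ (-(d : ℝ) / 2) :=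
    Real.rpow_pos_of_pos (by positivity) _
  funext y
  have h1 : heatConvMeas μ t y
      = (2 * π * t) ^ (-(d : ℝ) / 2) * (Real.exp (-‖y‖ ^ 2 / (2 * t)) * F0 μ t y) := by
    rw [heatConvMeas, F0]
    have h2 : ∀ x : EuclideanSpace ℝ (Fin d), gaussDensity t (y - x)
        = (2 * π * t) ^ (-(d : ℝ) / 2) * (Real.exp (-‖y‖ ^ 2 / (2 * t)) * tilt y t x) := by
      intro x
      rw [gaussDensity, tilt, ← Real.exp_add]
      congr 1
      rw [norm_sub_sq_real]
      field_simp
      ring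
    simp_rw [h2]
    rw [integral_const_mul]
    congr 1
    exact integral_const_mul _ _
  rw [h1, Real.log_mul hK.ne' (mul_pos (Real.exp_pos _) (F0_pos ht y)).ne',
    Real.log_mul (Real.exp_ne_zero _) (F0_pos ht y).ne', Real.log_exp]
  ring

end LogHessAux

open LogHessAux in
/-- **Probabilistic representation of the log-Hessian (equation (7)).** For a probability
measure `μ`, `t > 0` and `z`, one has
`-∇² log(μ*γ_t)(z) = (1/t)(I_d - Cov(μ_{z,t})/t)` where `μ_{z,t} ∝ tilt(z,t) μ`;
stated here as an identity of quadratic forms: for every `w`, the quadratic form of the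
left-hand side at `w` equals `(1/t)(‖w‖² - ⟨w, Cov(μ_{z,t}) w⟩/t)`, the moments of `μ_{z,t}`
being written as tilted integrals normalized by `c = ∫ tilt(z,t) dμ`. -/
theorem log_hessian_probabilistic_representation
    (d : ℕ) (μ : Measure (EuclideanSpace ℝ (Fin d))) [IsProbabilityMeasure μ]
    (t : ℝ) (ht : 0 < t) (z w : EuclideanSpace ℝ (Fin d)) :
    -(iteratedFDeriv ℝ 2 (fun y => Real.log (heatConvMeas μ t y)) z ![w, w])
      = 1 / t * (‖w‖ ^ 2 -
          ((∫ x, tilt z t x * ⟪w, x⟫ ^ 2 ∂μ) / (∫ x, tilt z t x ∂μ)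
            - ((∫ x, tilt z t x * ⟪w, x⟫ ∂μ) / (∫ x, tilt z t x ∂μ)) ^ 2) / t) := by
  have hc0 : 0 < F0 μ t z := F0_pos (μ := μ) ht z
  rw [log_heatConv_eq (μ := μ) ht, iteratedFDeriv_two_apply]
  have hP : ∀ y : EuclideanSpace ℝ (Fin d),
      HasFDerivAt (fun y => (Real.log ((2 * π * t) ^ (-(d : ℝ) / 2)) + -(2 * t)⁻¹ * ‖y‖ ^ 2)
          + Real.log (F0 μ t y))
        ((-t⁻¹) • innerB y + (F0 μ t y)⁻¹ • D1 μ t y) y := by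
    intro y
    have h2 : HasFDerivAt (fun y : EuclideanSpace ℝ (Fin d) => ‖y‖ ^ 2)
        (2 • innerSL ℝ y) y := by
      simpa using (hasFDerivAt_id y).norm_sq
    have h3 := (hasFDerivAt_const (Real.log ((2 * π * t) ^ (-(d : ℝ) / 2))) y).add
      (h2.const_mul (-(2 * t)⁻¹))
    have h4 := (hasFDerivAt_F0 (μ := μ) ht y).log (F0_pos (μ := μ) ht y).ne'
    refine (h3.add h4).congr_fderiv ?_
    ext v
    simp only [ContinuousLinearMap.add_apply, ContinuousLinearMap.smul_apply, innerSL_apply_apply,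
      innerB_apply, smul_eq_mul, zero_add, ContinuousLinearMap.zero_apply, nsmul_eq_mul,
      Nat.cast_ofNat]
    ring
  have hfd : (fderiv ℝ (fun y => (Real.log ((2 * π * t) ^ (-(d : ℝ) / 2)) + -(2 * t)⁻¹ * ‖y‖ ^ 2)
          + Real.log (F0 μ t y)))
      = fun y => (-t⁻¹) • innerB y + (F0 μ t y)⁻¹ • D1 μ t y :=
    funext fun y => (hP y).fderiv
  have hinv : HasFDerivAt (fun y => (F0 μ t y)⁻¹)
      ((-(F0 μ t z ^ 2)⁻¹) • D1 μ t z) z :=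
    (hasDerivAt_inv hc0.ne').comp_hasFDerivAt z (hasFDerivAt_F0 (μ := μ) ht z)
  have hQ : HasFDerivAt
      (fun y : EuclideanSpace ℝ (Fin d) => (-t⁻¹) • innerB y + (F0 μ t y)⁻¹ • D1 μ t y)
      ((-t⁻¹) • (innerB (d := d))
        + ((F0 μ t z)⁻¹ • D2 μ t z
          + ((-(F0 μ t z ^ 2)⁻¹) • D1 μ t z).smulRight (D1 μ t z))) z :=
    ((innerB (d := d)).hasFDerivAt.const_smul (-t⁻¹)).add
      (hinv.smul (hasFDerivAt_D1 (μ := μ) ht z))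
  rw [hfd, hQ.fderiv]
  have hF0 : (∫ x, tilt z t x ∂μ) = F0 μ t z := rfl
  simp only [Matrix.cons_val_zero, Matrix.cons_val_one, Matrix.head_cons,
    ContinuousLinearMap.add_apply, ContinuousLinearMap.smul_apply,
    ContinuousLinearMap.smulRight_apply, innerSL_apply_apply, innerB_apply, smul_eq_mul,
    D1_apply (μ := μ) ht z w, D2_apply (μ := μ) ht z w, real_inner_self_eq_norm_sq, hF0]
  have ht' : t ≠ 0 := ht.ne'
  have hc0' : F0 μ t z ≠ 0 := hc0.ne'
  field_simp
  ring
end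
end
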